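/- arXiv:2404.02901 — 6 statements merged into one kernel-verified Lean document; each statement's English description precedes it below -/
import Mathlib

section
/- Let L(y,v) = (v − 1/(2y))² if y ≠ 0 and L(y,v) = +∞ if y = 0. Then for every Lipschitz function y : [0,1] → ℝ with y(0) = 0, the energy F(y) = ∫₀¹ L(y(t), y'(t)) dt equals +∞. -/
open MeasureTheory Set

/-- The extended-valued Lagrangian `L(y,v) = (v - 1/(2y))²` if `y ≠ 0`, `+∞` if `y = 0`. -/
noncomputable def Lag (u v : ℝ) : ENNReal :=
  if u = 0 then ⊤ else ENNReal.ofReal ((v - 1 / (2 * u)) ^ 2)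

/-- The energy `F(y) = ∫₀¹ L(y(t), y'(t)) dt` with values in `[0,+∞]`. -/
noncomputable def energyLag (y : ℝ → ℝ) : ENNReal :=
  ∫⁻ t in Set.Ioc (0 : ℝ) 1, Lag (y t) (deriv y t)

lemma lipschitzOnWith_weaken {f : ℝ → ℝ} {s : Set ℝ} {K K' : NNReal}
    (h : LipschitzOnWith K f s) (hKK' : K ≤ K') : LipschitzOnWith K' f s := by
  intro x hx z hz
  exact (h hx hz).trans (mul_le_mul_left (by exact_mod_cast hKK') _)

theorem lavrentiev_example_lipschitz_infinite_energy
    (y : ℝ → ℝ) (K : NNReal) (hy : LipschitzOnWith K y (Set.Icc (0 : ℝ) 1))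
    (hy0 : y 0 = 0) :
    energyLag y = ⊤ := by
  have hyC : LipschitzOnWith (K + 1) y (Set.Icc (0 : ℝ) 1) :=
    lipschitzOnWith_weaken hy (le_add_of_nonneg_right zero_le_one)
  set C : ℝ := (K : ℝ) + 1 with hCdef
  have hCcast : ((K + 1 : NNReal) : ℝ) = C := by push_cast [hCdef]; ring
  have hC0 : 0 < C := by positivity
  -- bound on |y t|
  have h1 : ∀ t ∈ Icc (0 : ℝ) 1, |y t| ≤ C * t := by
    intro t ht
    have := hyC.norm_sub_le ht (left_mem_Icc.2 zero_le_one)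
    rw [hy0, sub_zero, sub_zero, Real.norm_eq_abs, Real.norm_eq_abs,
      abs_of_nonneg ht.1, hCcast] at this
    exact this
  -- bound on |deriv y t|
  have h2 : ∀ t ∈ Ioo (0 : ℝ) 1, |deriv y t| ≤ C := by
    intro t ht
    by_cases hd : DifferentiableAt ℝ y t
    · have h' := (hd.hasDerivAt.hasFDerivAt).le_of_lipschitzOn
        (Icc_mem_nhds ht.1 ht.2) hyC
      rw [hCcast] at h'
      simpa only [ContinuousLinearMap.norm_smulRight_apply, ContinuousLinearMap.norm_id, ContinuousLinearMap.norm_toSpanSingleton,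
        norm_one, one_mul, Real.norm_eq_abs] using h'
    · rw [deriv_zero_of_not_differentiableAt hd]
      simpa using hC0.le
  set ε : ℝ := min (1 / 2) (1 / (4 * C ^ 2)) with hεdef
  have hε0 : 0 < ε := lt_min (by norm_num) (by positivity)
  have hε1 : ε < 1 := lt_of_le_of_lt (min_le_left _ _) (by norm_num)
  set c : ℝ := (1 / (4 * C)) ^ 2 with hcdef
  have hc0 : 0 < c := by positivity
  -- key pointwise bound
  have key : ∀ t ∈ Ioc (0 : ℝ) ε,
      ENNReal.ofReal (c * t ^ (-2 : ℝ)) ≤ Lag (y t) (deriv y t) := by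
    intro t ht
    have ht0 : 0 < t := ht.1
    have ht1 : t < 1 := lt_of_le_of_lt ht.2 hε1
    by_cases hyt : y t = 0
    · simp [Lag, hyt]
    · rw [Lag, if_neg hyt]
      apply ENNReal.ofReal_le_ofReal
      have hrpow : t ^ (-2 : ℝ) = (t ^ 2)⁻¹ := by
        rw [Real.rpow_neg ht0.le, show ((2:ℝ)) = ((2:ℕ):ℝ) by norm_num, Real.rpow_natCast]
      have hyabs : |y t| ≤ C * t := h1 t ⟨ht0.le, ht1.le⟩
      have hyabs0 : 0 < |y t| := abs_pos.2 hyt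
      have hinv : 1 / (2 * C * t) ≤ |1 / (2 * y t)| := by
        rw [abs_div, abs_mul]
        simp only [abs_one, abs_two]
        apply div_le_div_of_nonneg_left one_pos.le (by positivity)
        calc 2 * |y t| ≤ 2 * (C * t) := by linarith
          _ = 2 * C * t := by ring
      have hdb : |deriv y t| ≤ C := h2 t ⟨ht0, ht1⟩
      have htsmall : t ≤ 1 / (4 * C ^ 2) := le_trans ht.2 (min_le_right _ _)
      have hCsmall : C ≤ 1 / (4 * C * t) := by
        rw [le_div_iff₀ (by positivity)]
        calc C * (4 * C * t) = 4 * C ^ 2 * t := by ring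
          _ ≤ 4 * C ^ 2 * (1 / (4 * C ^ 2)) := by
              apply mul_le_mul_of_nonneg_left htsmall (by positivity)
          _ = 1 := by field_simp
      have habs : 1 / (4 * C * t) ≤ |deriv y t - 1 / (2 * y t)| := by
        have h3 : |1 / (2 * y t)| - |deriv y t| ≤ |deriv y t - 1 / (2 * y t)| := by
          have := abs_sub_abs_le_abs_sub (1 / (2 * y t)) (deriv y t)
          rwa [abs_sub_comm] at this
        have h4 : 1 / (2 * C * t) - 1 / (4 * C * t) = 1 / (4 * C * t) := by
          field_simp
          ring
        linarith [hinv, hdb, hCsmall]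
      calc c * t ^ (-2 : ℝ) = (1 / (4 * C * t)) ^ 2 := by
            rw [hrpow, hcdef]; field_simp
        _ ≤ |deriv y t - 1 / (2 * y t)| ^ 2 := by
            apply pow_le_pow_left₀ (by positivity) habs
        _ = (deriv y t - 1 / (2 * y t)) ^ 2 := sq_abs _
  -- the lower bound integral is infinite
  have hbig : ∫⁻ t in Ioc (0 : ℝ) ε, ENNReal.ofReal (c * t ^ (-2 : ℝ)) = ⊤ := by
    by_contra h
    have hfin : ∫⁻ t in Ioo (0 : ℝ) ε, ENNReal.ofReal (c * t ^ (-2 : ℝ)) < ⊤ :=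
      lt_of_le_of_lt (lintegral_mono_set Ioo_subset_Ioc_self) (lt_top_iff_ne_top.2 h)
    have hInt : IntegrableOn (fun t : ℝ => c * t ^ (-2 : ℝ)) (Ioo (0 : ℝ) ε) := by
      constructor
      · apply Measurable.aestronglyMeasurable
        exact (measurable_id.pow_const _).const_mul c
      · rw [hasFiniteIntegral_iff_ofReal]
        · exact hfin
        · filter_upwards [ae_restrict_mem measurableSet_Ioo] with t ht
          exact mul_nonneg hc0.le (Real.rpow_nonneg ht.1.le _)
    have hInt2 := hInt.const_mul c⁻¹
    simp only [← mul_assoc, inv_mul_cancel₀ hc0.ne', one_mul] at hInt2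
    have h12 : ¬ (-1 : ℝ) < -2 := by norm_num
    exact h12 ((intervalIntegral.integrableOn_Ioo_rpow_iff hε0).1 hInt2)
  rw [energyLag, eq_top_iff, ← hbig]
  calc ∫⁻ t in Ioc (0 : ℝ) ε, ENNReal.ofReal (c * t ^ (-2 : ℝ))
      ≤ ∫⁻ t in Ioc (0 : ℝ) ε, Lag (y t) (deriv y t) :=
        setLIntegral_mono' measurableSet_Ioc key
    _ ≤ ∫⁻ t in Set.Ioc (0 : ℝ) 1, Lag (y t) (deriv y t) :=
        lintegral_mono_set (Ioc_subset_Ioc_right hε1.le)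
end

section
/- Let y : [0,1] → ℝ be Lipschitz with Lipschitz constant C > 0, and let 0 ≤ c < b ≤ 1 be such that y(t) ≠ 0 for all t ∈ [c,b]. Then ∫_c^b (y'(t) − 1/(2y(t)))² dt ≥ ln|y(c)| − ln|y(b)| + (1/(4C²(b−c)))·(ln|y(b)| − ln|y(c)|)². -/
open MeasureTheory Set Filter Topology intervalIntegral

theorem lipschitz_ftc {g : ℝ → ℝ} {K : NNReal} (hg : LipschitzWith K g)
    {c b : ℝ} (hcb : c ≤ b) : ∫ t in c..b, deriv g t = g b - g c := by
  have hcont : Continuous g := hg.continuous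
  set F : ℝ → ℝ := fun x => ∫ t in c..x, g t with hF_def
  have hF : ∀ x : ℝ, HasDerivAt F (g x) x := by
    intro x
    exact intervalIntegral.integral_hasDerivAt_right
      (hcont.intervalIntegrable _ _)
      (hcont.stronglyMeasurableAtFilter _ _) hcont.continuousAt
  set l : Filter ℝ := nhdsWithin 0 {0}ᶜ with hl_def
  -- limit of slopes
  have hb' : Tendsto (fun h : ℝ => (F (b + h) - F b) / h) l (𝓝 (g b)) := by
    have := (hF b).tendsto_slope_zero
    simpa [smul_eq_mul, div_eq_inv_mul] using this
  have hc' : Tendsto (fun h : ℝ => (F (c + h) - F c) / h) l (𝓝 (g c)) := by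
    have := (hF c).tendsto_slope_zero
    simpa [smul_eq_mul, div_eq_inv_mul] using this
  have hlim1 : Tendsto (fun h : ℝ => (F (b + h) - F b) / h - (F (c + h) - F c) / h) l
      (𝓝 (g b - g c)) := hb'.sub hc'
  -- identity for h ≠ 0
  have hid : ∀ h : ℝ, h ≠ 0 →
      (∫ t in c..b, (g (t + h) - g t) / h)
        = (F (b + h) - F b) / h - (F (c + h) - F c) / h := by
    intro h hh
    have hint1 : IntervalIntegrable (fun t => g (t + h)) volume c b :=
      (hcont.comp (continuous_id.add continuous_const)).intervalIntegrable _ _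
    have hint2 : IntervalIntegrable g volume c b := hcont.intervalIntegrable _ _
    rw [intervalIntegral.integral_div]
    rw [intervalIntegral.integral_sub hint1 hint2]
    have e1 : (∫ t in c..b, g (t + h)) = ∫ t in c + h..b + h, g t :=
      intervalIntegral.integral_comp_add_right (a := c) (b := b) g h
    rw [e1]
    have e2 : F (b + h) - F (c + h) = ∫ t in c + h..b + h, g t := by
      simp only [hF_def]
      rw [intervalIntegral.integral_interval_sub_left (hcont.intervalIntegrable _ _)
        (hcont.intervalIntegrable _ _)]
    have e3 : F b - F c = ∫ t in c..b, g t := by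
      simp only [hF_def]
      rw [intervalIntegral.integral_interval_sub_left (hcont.intervalIntegrable _ _)
        (hcont.intervalIntegrable _ _)]
    rw [← e2, e3.symm]
    ring
  -- dominated convergence
  have hdct : Tendsto (fun h : ℝ => ∫ t in c..b, (g (t + h) - g t) / h) l
      (𝓝 (∫ t in c..b, deriv g t)) := by
    apply intervalIntegral.tendsto_integral_filter_of_dominated_convergence (fun _ => (K : ℝ))
    · filter_upwards with h
      exact ((hcont.comp (continuous_id.add continuous_const)).sub hcont).div_const h
        |>.aestronglyMeasurable
    · filter_upwards [self_mem_nhdsWithin] with h (hh : h ≠ 0)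
      filter_upwards with x _
      have := hg.dist_le_mul (x + h) x
      rw [Real.dist_eq, Real.dist_eq] at this
      simp only [add_sub_cancel_left] at this
      rw [Real.norm_eq_abs, abs_div]
      rw [div_le_iff₀ (abs_pos.2 hh)]
      simpa using this
    · exact intervalIntegrable_const
    · filter_upwards [hg.ae_differentiableAt] with x hx _
      have := hx.hasDerivAt.tendsto_slope_zero
      simpa [smul_eq_mul, div_eq_inv_mul] using this
  have hcongr : Tendsto (fun h : ℝ => ∫ t in c..b, (g (t + h) - g t) / h) l
      (𝓝 (g b - g c)) := by
    apply hlim1.congr'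
    filter_upwards [self_mem_nhdsWithin] with h (hh : h ≠ 0)
    exact (hid h hh).symm
  exact tendsto_nhds_unique hdct hcongr
-- pointwise algebra lemmas
theorem aux_div_le (lam v : ℝ) (hv : 0 < v) : lam / v ≤ lam ^ 2 + 1 / (4 * v ^ 2) := by
  rw [div_le_iff₀ hv, ← mul_le_mul_iff_left₀ hv]
  have hexp : (lam ^ 2 + 1 / (4 * v ^ 2)) * v * v = lam ^ 2 * v ^ 2 + 1 / 4 := by
    field_simp
  rw [hexp]
  nlinarith [sq_nonneg (lam * v - 1/2)]

theorem aux_pointwise (a u lam : ℝ) (hu : u ≠ 0) :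
    -(a / u) + (lam * (1 / |u|) - lam ^ 2) ≤ (a - 1 / (2 * u)) ^ 2 := by
  have hu2 : (0:ℝ) < |u| := abs_pos.2 hu
  have h1 : (a - 1 / (2 * u)) ^ 2 = a ^ 2 - a / u + 1 / (4 * u ^ 2) := by
    field_simp; ring
  have h2 : lam * (1 / |u|) ≤ lam ^ 2 + 1 / (4 * u ^ 2) := by
    have := aux_div_le lam |u| hu2
    rw [sq_abs] at this
    calc lam * (1 / |u|) = lam / |u| := by ring
    _ ≤ lam ^ 2 + 1 / (4 * u ^ 2) := this
  nlinarith [sq_nonneg a]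

theorem aux_log_lip {ε a b : ℝ} (hε : 0 < ε) (ha : ε ≤ a) (hb : ε ≤ b) :
    |Real.log a - Real.log b| ≤ |a - b| / ε := by
  have key : ∀ p q : ℝ, ε ≤ p → ε ≤ q → q ≤ p → Real.log p - Real.log q ≤ (p - q) / ε := by
    intro p q hp hq hqp
    have hq0 : 0 < q := lt_of_lt_of_le hε hq
    have hp0 : 0 < p := lt_of_lt_of_le hε hp
    have h1 : Real.log p - Real.log q = Real.log (p / q) := (Real.log_div hp0.ne' hq0.ne').symm
    rw [h1]
    have h2 : Real.log (p / q) ≤ p / q - 1 := Real.log_le_sub_one_of_pos (by positivity)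
    have h3 : p / q - 1 = (p - q) / q := by field_simp
    have h4 : (p - q) / q ≤ (p - q) / ε := by
      apply div_le_div_of_nonneg_left (by linarith) hε hq
    linarith
  rcases le_total b a with h | h
  · rw [abs_of_nonneg (by linarith : (0:ℝ) ≤ a - b),
      abs_of_nonneg (sub_nonneg.2 (Real.log_le_log (lt_of_lt_of_le hε hb) h))]
    exact key a b ha hb h
  · rw [abs_of_nonpos (by linarith : a - b ≤ 0),
      abs_of_nonpos (sub_nonpos.2 (Real.log_le_log (lt_of_lt_of_le hε ha) h))]
    have := key b a hb ha h
    have hd : -(a - b) / ε = (b - a) / ε := by ring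
    linarith [this, hd.ge, hd.le]
theorem lipschitz_log_energy_estimate
    (y : ℝ → ℝ) (C : ℝ) (hC : 0 < C)
    (hy : ∀ s ∈ Set.Icc (0 : ℝ) 1, ∀ t ∈ Set.Icc (0 : ℝ) 1, |y t - y s| ≤ C * |t - s|)
    (c b : ℝ) (hc : 0 ≤ c) (hcb : c < b) (hb : b ≤ 1)
    (hne : ∀ t ∈ Set.Icc c b, y t ≠ 0) :
    (∫ t in c..b, (deriv y t - 1 / (2 * y t)) ^ 2)
      ≥ Real.log |y c| - Real.log |y b|
        + 1 / (4 * C ^ 2 * (b - c)) * (Real.log |y b| - Real.log |y c|) ^ 2 := by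
  have hD : (0:ℝ) < b - c := sub_pos.2 hcb
  -- the clamp function and the clamped version of y
  set p : ℝ → ℝ := fun t => max c (min t b) with hp_def
  have hp_mem : ∀ t, p t ∈ Set.Icc c b := fun t =>
    ⟨le_max_left _ _, max_le hcb.le (min_le_right _ _)⟩
  have hp_fix : ∀ t ∈ Set.Icc c b, p t = t := by
    intro t ht
    simp only [hp_def]
    rw [min_eq_left ht.2, max_eq_right ht.1]
  set z : ℝ → ℝ := fun t => y (p t) with hz_def
  have hz_eq : ∀ t ∈ Set.Icc c b, z t = y t := by
    intro t ht
    simp only [hz_def]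
    rw [hp_fix t ht]
  have hzne : ∀ t, z t ≠ 0 := fun t => hne _ (hp_mem t)
  -- Lipschitz property of z
  have hp_lip : ∀ s t : ℝ, |p t - p s| ≤ |t - s| := by
    intro s t
    simp only [hp_def]
    calc |max c (min t b) - max c (min s b)|
        = |max (min t b) c - max (min s b) c| := by rw [max_comm c, max_comm c]
      _ ≤ |min t b - min s b| := abs_max_sub_max_le_abs _ _ _
      _ ≤ max |t - s| |b - b| := abs_min_sub_min_le_max _ _ _ _
      _ = |t - s| := by simp
  have hIcc_sub : Set.Icc c b ⊆ Set.Icc (0:ℝ) 1 := Set.Icc_subset_Icc hc hb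
  have hz_lip : LipschitzWith ⟨C, hC.le⟩ z := by
    apply LipschitzWith.of_dist_le_mul
    intro t s
    rw [Real.dist_eq, Real.dist_eq]
    have h1 : |y (p t) - y (p s)| ≤ C * |p t - p s| :=
      hy (p s) (hIcc_sub (hp_mem s)) (p t) (hIcc_sub (hp_mem t))
    have h2 := hp_lip s t
    calc |z t - z s| ≤ C * |p t - p s| := h1
      _ ≤ C * |t - s| := by nlinarith [abs_nonneg (p t - p s)]
  have hzC : ∀ t, |deriv z t| ≤ C := by
    intro t
    have := norm_deriv_le_of_lipschitz (𝕜 := ℝ) (x₀ := t) hz_lip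
    rw [Real.norm_eq_abs] at this
    exact this
  have hz_cont : Continuous z := hz_lip.continuous
  -- positive lower bound on |z|
  obtain ⟨t0, ht0, hmin⟩ := isCompact_Icc.exists_isMinOn (Set.nonempty_Icc.2 hcb.le)
    ((continuous_abs.comp hz_cont).continuousOn (s := Set.Icc c b))
  set ε : ℝ := |z t0| with hε_def
  have hε : 0 < ε := abs_pos.2 (hzne t0)
  have hεz : ∀ t, ε ≤ |z t| := by
    intro t
    have h1 : z (p t) = z t := by
      simp only [hz_def]
      rw [hp_fix (p t) (hp_mem t)]
    have h2 := isMinOn_iff.1 hmin (p t) (hp_mem t)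
    simpa [h1] using h2
  -- the logarithm of z is Lipschitz
  set g : ℝ → ℝ := fun t => Real.log (z t) with hg_def
  have hg_lip : LipschitzWith ⟨C / ε, by positivity⟩ g := by
    apply LipschitzWith.of_dist_le_mul
    intro t s
    rw [Real.dist_eq, Real.dist_eq]
    have h1 : |Real.log (z t) - Real.log (z s)| = abs (Real.log (abs (z t)) - Real.log (abs (z s))) := by
      rw [Real.log_abs, Real.log_abs]
    have h2 : abs (Real.log (abs (z t)) - Real.log (abs (z s))) ≤ abs (abs (z t) - abs (z s)) / ε :=
      aux_log_lip hε (hεz t) (hεz s)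
    have h3 : abs (abs (z t) - abs (z s)) ≤ |z t - z s| := abs_abs_sub_abs_le_abs_sub _ _
    have h4 : |z t - z s| ≤ C * |t - s| := by
      have := hz_lip.dist_le_mul t s
      rw [Real.dist_eq, Real.dist_eq] at this
      exact this
    calc |g t - g s| = abs (Real.log (abs (z t)) - Real.log (abs (z s))) := h1
      _ ≤ abs (abs (z t) - abs (z s)) / ε := h2
      _ ≤ (C * |t - s|) / ε := (div_le_div_iff_of_pos_right hε).2 (by linarith)
      _ = C / ε * |t - s| := by ring
  -- a.e. derivative of g
  have hderiv_ae : ∀ᵐ t : ℝ, deriv g t = deriv z t / z t := by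
    filter_upwards [hz_lip.ae_differentiableAt] with t ht
    exact (ht.hasDerivAt.log (hzne t)).deriv
  have hI1 : (∫ t in c..b, deriv z t / z t) = Real.log (z b) - Real.log (z c) := by
    have hftc := lipschitz_ftc hg_lip hcb.le
    rw [← hftc]
    apply intervalIntegral.integral_congr_ae
    filter_upwards [hderiv_ae] with t ht _
    exact ht.symm
  set L : ℝ := Real.log (z b) - Real.log (z c) with hL_def
  set lam : ℝ := |L| / (2 * C * (b - c)) with hlam_def
  have hlam0 : 0 ≤ lam := by positivity
  -- integrability facts
  have hmeas_dz : Measurable (deriv z) := measurable_deriv z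
  have hcont_inv2 : Continuous (fun t => 1 / (2 * z t)) :=
    continuous_const.div (continuous_const.mul hz_cont) (fun t => mul_ne_zero two_ne_zero (hzne t))
  have hcont_inv : Continuous (fun t => 1 / |z t|) :=
    continuous_const.div (continuous_abs.comp hz_cont) (fun t => abs_ne_zero.2 (hzne t))
  have hbz : ∀ t, |1 / (2 * z t)| ≤ 1 / (2 * ε) := by
    intro t
    rw [abs_div, abs_mul, abs_two, abs_one]
    apply div_le_div_of_nonneg_left one_pos.le (by positivity)
    have := hεz t
    linarith
  have hint_f1 : IntervalIntegrable (fun t => (deriv z t - 1 / (2 * z t)) ^ 2) volume c b := by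
    rw [intervalIntegrable_iff_integrableOn_Ioc_of_le hcb.le]
    apply MeasureTheory.Integrable.mono'
      (MeasureTheory.integrable_const ((C + 1 / (2 * ε)) ^ 2))
    · exact ((hmeas_dz.sub hcont_inv2.measurable).pow_const 2).aestronglyMeasurable
    · apply MeasureTheory.ae_of_all
      intro t
      rw [Real.norm_eq_abs, abs_pow]
      apply pow_le_pow_left₀ (abs_nonneg _) ?_ 2
      calc |deriv z t - 1 / (2 * z t)| ≤ |deriv z t| + |1 / (2 * z t)| := abs_sub _ _
        _ ≤ C + 1 / (2 * ε) := add_le_add (hzC t) (hbz t)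
  have hint_f2 : IntervalIntegrable (fun t => deriv z t / z t) volume c b := by
    rw [intervalIntegrable_iff_integrableOn_Ioc_of_le hcb.le]
    apply MeasureTheory.Integrable.mono' (MeasureTheory.integrable_const (C / ε))
    · exact (hmeas_dz.div hz_cont.measurable).aestronglyMeasurable
    · apply MeasureTheory.ae_of_all
      intro t
      rw [Real.norm_eq_abs, abs_div]
      exact div_le_div₀ hC.le (hzC t) hε (hεz t)
  have hint_f3 : IntervalIntegrable (fun t => 1 / |z t|) volume c b :=
    hcont_inv.intervalIntegrable _ _
  have hint_abs_f2 : IntervalIntegrable (fun t => |deriv z t / z t|) volume c b := hint_f2.abs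
  set J : ℝ := ∫ t in c..b, 1 / |z t| with hJ_def
  have hJ0 : 0 ≤ J := by
    rw [hJ_def]
    apply intervalIntegral.integral_nonneg hcb.le
    intro t _
    positivity
  have hLJ : |L| ≤ C * J := by
    rw [← hI1]
    calc |∫ t in c..b, deriv z t / z t| ≤ ∫ t in c..b, |deriv z t / z t| :=
          intervalIntegral.abs_integral_le_integral_abs hcb.le
      _ ≤ ∫ t in c..b, C * (1 / |z t|) := by
          apply intervalIntegral.integral_mono_on hcb.le hint_abs_f2 (hint_f3.const_mul C)
          intro t _
          rw [abs_div, mul_one_div]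
          have h0 : (0:ℝ) < |z t| := lt_of_lt_of_le hε (hεz t)
          gcongr
          exact hzC t
      _ = C * J := by rw [intervalIntegral.integral_const_mul, hJ_def]
  -- pointwise estimate and integration
  have hint_lhs : IntervalIntegrable
      (fun t => -(deriv z t / z t) + (lam * (1 / |z t|) - lam ^ 2)) volume c b :=
    hint_f2.neg.add ((hint_f3.const_mul lam).sub intervalIntegrable_const)
  have hmono : (∫ t in c..b, (-(deriv z t / z t) + (lam * (1 / |z t|) - lam ^ 2)))
      ≤ ∫ t in c..b, (deriv z t - 1 / (2 * z t)) ^ 2 := by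
    apply intervalIntegral.integral_mono_on hcb.le hint_lhs hint_f1
    intro t _
    exact aux_pointwise (deriv z t) (z t) lam (hzne t)
  have hsplit : (∫ t in c..b, (-(deriv z t / z t) + (lam * (1 / |z t|) - lam ^ 2)))
      = -L + (lam * J - lam ^ 2 * (b - c)) := by
    have hneg : IntervalIntegrable (fun t => -(deriv z t / z t)) volume c b := hint_f2.neg
    have hmul : IntervalIntegrable (fun t => lam * (1 / |z t|)) volume c b :=
      hint_f3.const_mul lam
    have hsub : IntervalIntegrable (fun t => lam * (1 / |z t|) - lam ^ 2) volume c b :=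
      hmul.sub intervalIntegrable_const
    rw [intervalIntegral.integral_add hneg hsub,
      intervalIntegral.integral_neg, hI1,
      intervalIntegral.integral_sub hmul intervalIntegrable_const,
      intervalIntegral.integral_const_mul, intervalIntegral.integral_const]
    rw [← hJ_def]
    simp only [smul_eq_mul]
    ring
  -- rewrite the goal in terms of z
  have hyb : Real.log |y b| = Real.log (z b) := by
    rw [Real.log_abs, hz_eq b ⟨hcb.le, le_refl b⟩]
  have hyc : Real.log |y c| = Real.log (z c) := by
    rw [Real.log_abs, hz_eq c ⟨le_refl c, hcb.le⟩]
  have hb_ae : ∀ᵐ t : ℝ, t ≠ b := by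
    rw [MeasureTheory.ae_iff]
    simpa using MeasureTheory.measure_singleton (μ := (volume : MeasureTheory.Measure ℝ)) b
  have hcongr : ∀ᵐ t : ℝ, t ∈ Set.uIoc c b →
      (deriv y t - 1 / (2 * y t)) ^ 2 = (deriv z t - 1 / (2 * z t)) ^ 2 := by
    filter_upwards [hb_ae] with t htb hmem
    rw [Set.uIoc_of_le hcb.le] at hmem
    have htIoo : t ∈ Set.Ioo c b := ⟨hmem.1, lt_of_le_of_ne hmem.2 htb⟩
    have hnb : Set.Ioo c b ∈ nhds t := isOpen_Ioo.mem_nhds htIoo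
    have hev : y =ᶠ[nhds t] z := by
      filter_upwards [hnb] with s hs
      exact (hz_eq s ⟨hs.1.le, hs.2.le⟩).symm
    rw [hev.deriv_eq, hz_eq t ⟨htIoo.1.le, htIoo.2.le⟩]
  rw [ge_iff_le, intervalIntegral.integral_congr_ae hcongr, hyb, hyc]
  have hswap : Real.log (z c) - Real.log (z b) = -L := by rw [hL_def]; ring
  rw [hswap, ← hL_def]
  -- final arithmetic
  have habs : |L| * |L| = L ^ 2 := by rw [← sq_abs L]; ring
  have e2 : lam ^ 2 * (b - c) = L ^ 2 / (4 * C ^ 2 * (b - c)) := by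
    rw [hlam_def, div_pow, sq_abs]
    field_simp
    ring
  have e3 : lam * (|L| / C) = 2 * (L ^ 2 / (4 * C ^ 2 * (b - c))) := by
    rw [hlam_def, div_mul_div_comm, habs]
    field_simp
    ring
  have e4 : 1 / (4 * C ^ 2 * (b - c)) * L ^ 2 = L ^ 2 / (4 * C ^ 2 * (b - c)) := by ring
  have hstep : lam * (|L| / C) ≤ lam * J := by
    apply mul_le_mul_of_nonneg_left ?_ hlam0
    rw [div_le_iff₀ hC]
    linarith [hLJ]
  linarith [hmono, hsplit, e2, e3, e4, hstep]
end

section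
/- Let L : [a,b] × ℝ × ℝ → ℝ be of class C², with partial derivatives L_y and L_v with respect to the second and third variables. Let y_* : [a,b] → ℝ be of class C² with y_*(a) = A and y_*(b) = B, and suppose y_* minimizes F(y) = ∫ₐᵇ L(t, y(t), y'(t)) dt among all C² functions y : [a,b] → ℝ with y(a) = A and y(b) = B. Then y_* satisfies the Euler–Lagrange equation: for every t ∈ [a,b], (d/dt) L_v(t, y_*(t), y_*'(t)) = L_y(t, y_*(t), y_*'(t)). -/
open Set intervalIntegral

theorem euler_lagrange
    (a b A B : ℝ) (hab : a < b)
    (L : ℝ → ℝ → ℝ → ℝ)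
    (hL : ContDiff ℝ 2 (fun p : ℝ × ℝ × ℝ => L p.1 p.2.1 p.2.2))
    (y : ℝ → ℝ) (hy : ContDiff ℝ 2 y) (hya : y a = A) (hyb : y b = B)
    (hmin : ∀ z : ℝ → ℝ, ContDiff ℝ 2 z → z a = A → z b = B →
      (∫ t in a..b, L t (y t) (deriv y t)) ≤ ∫ t in a..b, L t (z t) (deriv z t)) :
    ∀ t ∈ Set.Icc a b,
      deriv (fun s => deriv (fun v => L s (y s) v) (deriv y s)) t
        = deriv (fun u => L t u (deriv y t)) (y t) := by
  classical
  set Lp : ℝ × ℝ × ℝ → ℝ := fun p => L p.1 p.2.1 p.2.2 with hLpdef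
  have hLdiff : Differentiable ℝ Lp := hL.differentiable (by norm_num)
  set Ly : ℝ × ℝ × ℝ → ℝ := fun p => fderiv ℝ Lp p (0, 1, 0) with hLydef
  set Lv : ℝ × ℝ × ℝ → ℝ := fun p => fderiv ℝ Lp p (0, 0, 1) with hLvdef
  have hfd1 : ContDiff ℝ 1 (fderiv ℝ Lp) := hL.fderiv_right (by norm_num)
  have hLyC : ContDiff ℝ 1 Ly := hfd1.clm_apply contDiff_const
  have hLvC : ContDiff ℝ 1 Lv := hfd1.clm_apply contDiff_const
  set d : ℝ → ℝ := deriv y with hddef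
  have hyd : ∀ s, HasDerivAt y (d s) s :=
    fun s => ((hy.differentiable (by norm_num)) s).hasDerivAt
  have hdC : ContDiff ℝ 1 d := by
    have h2 : ContDiff ℝ ((1 : ℕ) + 1 : ℕ) y := by exact_mod_cast hy
    exact (contDiff_succ_iff_deriv.mp (by exact_mod_cast h2)).2.2
  -- the curve s ↦ (s, y s, y' s)
  set c : ℝ → ℝ × ℝ × ℝ := fun s => (s, y s, d s) with hcdef
  have hcC : ContDiff ℝ 1 c := contDiff_id.prodMk ((hy.of_le one_le_two).prodMk hdC)
  -- pointwise derivative facts for the partial maps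
  have hpartial2 : ∀ s u v : ℝ,
      HasDerivAt (fun u' => L s u' v) (Ly (s, u, v)) u := by
    intro s u v
    have hcurve : HasDerivAt (fun u' : ℝ => ((s, u', v) : ℝ × ℝ × ℝ))
        ((0, 1, 0) : ℝ × ℝ × ℝ) u :=
      (hasDerivAt_const u s).prodMk ((hasDerivAt_id u).prodMk (hasDerivAt_const u v))
    exact (hLdiff (s, u, v)).hasFDerivAt.comp_hasDerivAt u hcurve
  have hpartial3 : ∀ s u v : ℝ,
      HasDerivAt (fun v' => L s u v') (Lv (s, u, v)) v := by
    intro s u v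
    have hcurve : HasDerivAt (fun v' : ℝ => ((s, u, v') : ℝ × ℝ × ℝ))
        ((0, 0, 1) : ℝ × ℝ × ℝ) v :=
      (hasDerivAt_const v s).prodMk ((hasDerivAt_const v u).prodMk (hasDerivAt_id v))
    exact (hLdiff (s, u, v)).hasFDerivAt.comp_hasDerivAt v hcurve
  -- identification of the goal functions
  have hQeq : (fun s => deriv (fun v => L s (y s) v) (d s)) = fun s => Lv (c s) := by
    funext s
    exact (hpartial3 s (y s) (d s)).deriv
  set Qf : ℝ → ℝ := fun s => Lv (c s) with hQfdef
  set Pf : ℝ → ℝ := fun s => Ly (c s) with hPfdef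
  have hQfC : ContDiff ℝ 1 Qf := hLvC.comp hcC
  have hPfcont : Continuous Pf := (hLyC.continuous).comp hcC.continuous
  have hQf'cont : Continuous (deriv Qf) := hQfC.continuous_deriv le_rfl
  have hQfd : ∀ s, HasDerivAt Qf (deriv Qf s) s :=
    fun s => ((hQfC.differentiable (by norm_num)) s).hasDerivAt
  set h' : ℝ → ℝ := fun s => Pf s - deriv Qf s with hh'def
  have hh'cont : Continuous h' := hPfcont.sub hQf'cont
  -- Main step: for every smooth η compactly supported in (a,b), ∫ η • h' = 0
  have main : ∀ η : ℝ → ℝ, ContDiff ℝ (⊤ : ℕ∞) η → HasCompactSupport η →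
      tsupport η ⊆ Ioo a b → (∫ x, η x • h' x) = 0 := by
    intro η hη hηsupp hηsub
    set e : ℝ → ℝ := deriv η with hedef
    have hηd : ∀ s, HasDerivAt η (e s) s :=
      fun s => ((hη.differentiable (by simp)) s).hasDerivAt
    have hecont : Continuous e := (hη.continuous_deriv (by exact_mod_cast le_top))
    have hηcont : Continuous η := hη.continuous
    have hηa : η a = 0 := image_eq_zero_of_notMem_tsupport
      (fun h => (lt_irrefl a (hηsub h).1).elim)
    have hηb : η b = 0 := image_eq_zero_of_notMem_tsupport
      (fun h => (lt_irrefl b (hηsub h).2).elim)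
    -- the perturbed family
    set F : ℝ → ℝ → ℝ := fun x t => L t (y t + x * η t) (d t + x * e t) with hFdef
    set F' : ℝ → ℝ → ℝ := fun x t =>
      η t * Ly (t, y t + x * η t, d t + x * e t)
        + e t * Lv (t, y t + x * η t, d t + x * e t) with hF'def
    have hFcont : ∀ x, Continuous (F x) := by
      intro x
      exact hL.continuous.comp (continuous_id.prodMk
        ((hy.continuous.add (continuous_const.mul hηcont)).prodMk
          (hdC.continuous.add (continuous_const.mul hecont))))
    have hF'cont : Continuous (fun q : ℝ × ℝ => F' q.1 q.2) := by
      have hG : Continuous (fun q : ℝ × ℝ =>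
          ((q.2, y q.2 + q.1 * η q.2, d q.2 + q.1 * e q.2) : ℝ × ℝ × ℝ)) :=
        continuous_snd.prodMk
          (((hy.continuous.comp continuous_snd).add
            (continuous_fst.mul (hηcont.comp continuous_snd))).prodMk
          ((hdC.continuous.comp continuous_snd).add
            (continuous_fst.mul (hecont.comp continuous_snd))))
      exact ((hηcont.comp continuous_snd).mul (hLyC.continuous.comp hG)).add
        ((hecont.comp continuous_snd).mul (hLvC.continuous.comp hG))
    -- derivative in x
    have hDF : ∀ x t : ℝ, HasDerivAt (fun x' => F x' t) (F' x t) x := by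
      intro x t
      have hcurve : HasDerivAt
          (fun x' : ℝ => ((t, y t + x' * η t, d t + x' * e t) : ℝ × ℝ × ℝ))
          ((0, η t, e t) : ℝ × ℝ × ℝ) x := by
        refine (hasDerivAt_const x t).prodMk (HasDerivAt.prodMk ?_ ?_)
        · simpa using ((hasDerivAt_id x).mul_const (η t)).const_add (y t)
        · simpa using ((hasDerivAt_id x).mul_const (e t)).const_add (d t)
      have := (hLdiff (t, y t + x * η t, d t + x * e t)).hasFDerivAt.comp_hasDerivAt
        x hcurve
      have hlin : fderiv ℝ Lp (t, y t + x * η t, d t + x * e t) (0, η t, e t)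
          = F' x t := by
        have : ((0, η t, e t) : ℝ × ℝ × ℝ)
            = η t • ((0, 1, 0) : ℝ × ℝ × ℝ) + e t • ((0, 0, 1) : ℝ × ℝ × ℝ) := by
          simp [Prod.ext_iff]
        rw [this, map_add, map_smul, map_smul]
        simp [hF'def, hLydef, hLvdef, smul_eq_mul]
      rw [hlin] at this
      exact this
    -- uniform bound on derivative for x in the unit ball
    obtain ⟨C, hC⟩ : ∃ C, ∀ q ∈ (Icc (-1 : ℝ) 1 ×ˢ Icc a b), ‖F' q.1 q.2‖ ≤ C := by
      obtain ⟨C, hC⟩ := (isCompact_Icc.prod isCompact_Icc).exists_bound_of_continuousOn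
        hF'cont.continuousOn
      exact ⟨C, hC⟩
    -- differentiate under the integral
    have hder : HasDerivAt (fun x => ∫ t in a..b, F x t)
        (∫ t in a..b, F' 0 t) 0 := by
      have h := intervalIntegral.hasDerivAt_integral_of_dominated_loc_of_deriv_le
        (F := F) (F' := F') (x₀ := (0 : ℝ)) (a := a) (b := b)
        (μ := MeasureTheory.volume) (bound := fun _ => C) (s := Metric.ball 0 1) (Metric.ball_mem_nhds 0 one_pos)
        (Filter.Eventually.of_forall fun x => ((hFcont x).aestronglyMeasurable).restrict)
        ((hFcont 0).intervalIntegrable a b)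
        (((hF'cont.comp (Continuous.prodMk continuous_const continuous_id))).aestronglyMeasurable.restrict)
        ?_ (intervalIntegrable_const) ?_
      · exact h.2
      · refine Filter.Eventually.of_forall fun t ht x hx => ?_
        refine hC (x, t) ⟨?_, ?_⟩
        · have := mem_ball_iff_norm.mp hx
          simp only [sub_zero, Real.norm_eq_abs] at this
          exact ⟨by linarith [neg_abs_le x, this.le], by linarith [le_abs_self x, this.le]⟩
        · rw [uIoc_of_le hab.le] at ht
          exact ⟨ht.1.le, ht.2⟩
      · exact Filter.Eventually.of_forall fun t _ x _ => hDF x t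
    -- the perturbed functions are admissible, so 0 is a local min
    have hglobal : ∀ x : ℝ, (∫ t in a..b, F 0 t) ≤ ∫ t in a..b, F x t := by
      intro x
      have h0 : ∀ t, F 0 t = L t (y t) (d t) := by intro t; simp [hFdef]
      set z : ℝ → ℝ := fun s => y s + x * η s with hzdef
      have hzC : ContDiff ℝ 2 z := hy.add (contDiff_const.mul (hη.of_le (by norm_cast)))
      have hzderiv : ∀ t, deriv z t = d t + x * e t := by
        intro t
        exact ((hyd t).add ((hηd t).const_mul x)).deriv
      have hx : ∀ t, F x t = L t (z t) (deriv z t) := by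
        intro t; rw [hzderiv t]
      calc (∫ t in a..b, F 0 t) = ∫ t in a..b, L t (y t) (deriv y t) := by
            simp only [h0, hddef]
        _ ≤ ∫ t in a..b, L t (z t) (deriv z t) := by
            refine hmin z hzC ?_ ?_
            · simp [hzdef, hηa, hya]
            · simp [hzdef, hηb, hyb]
        _ = ∫ t in a..b, F x t := by simp only [hx]
    have hlocalmin : IsLocalMin (fun x => ∫ t in a..b, F x t) 0 :=
      Filter.Eventually.of_forall hglobal
    have hderzero : (∫ t in a..b, F' 0 t) = 0 :=
      hlocalmin.hasDerivAt_eq_zero hder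
    -- rewrite F' 0 t
    have hF'0 : ∀ t, F' 0 t = η t * Pf t + e t * Qf t := by
      intro t; simp [hF'def, hPfdef, hQfdef, hcdef]
    -- integration by parts
    have hQfcont : Continuous Qf := hQfC.continuous
    have hIBP : (∫ t in a..b, Qf t * e t)
        = Qf b * η b - Qf a * η a - ∫ t in a..b, deriv Qf t * η t := by
      exact intervalIntegral.integral_mul_deriv_eq_deriv_mul
        (fun t _ => hQfd t) (fun t _ => hηd t)
        (hQf'cont.intervalIntegrable a b)
        (hecont.intervalIntegrable a b)
    rw [hηa, hηb] at hIBP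
    have hsplit : (∫ t in a..b, F' 0 t)
        = (∫ t in a..b, η t * Pf t) + ∫ t in a..b, Qf t * e t := by
      rw [← intervalIntegral.integral_add (f := fun t => η t * Pf t) (g := fun t => Qf t * e t)
        ((hηcont.mul hPfcont).intervalIntegrable a b)
        ((hQfcont.mul hecont).intervalIntegrable a b)]
      congr 1; funext t; rw [hF'0 t]; ring
    have hzero : (∫ t in a..b, η t * h' t) = 0 := by
      have : (∫ t in a..b, η t * h' t)
          = (∫ t in a..b, η t * Pf t) - ∫ t in a..b, deriv Qf t * η t := by
        rw [← intervalIntegral.integral_sub (f := fun t => η t * Pf t) (g := fun t => deriv Qf t * η t)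
          ((hηcont.mul hPfcont).intervalIntegrable a b)
          ((hQf'cont.mul hηcont).intervalIntegrable a b)]
        congr 1; funext t; simp only [hh'def]; ring
      rw [this]
      have := hderzero
      rw [hsplit, hIBP] at this
      linarith
    -- convert the interval integral to an integral over ℝ
    have hsupp : ∀ x : ℝ, x ∉ Ioc a b → η x • h' x = 0 := by
      intro x hx
      have : x ∉ tsupport η := fun h => hx (Ioo_subset_Ioc_self (hηsub h))
      rw [image_eq_zero_of_notMem_tsupport this, zero_smul]
    calc (∫ x, η x • h' x)
        = ∫ x in Ioc a b, η x • h' x :=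
          (MeasureTheory.setIntegral_eq_integral_of_forall_compl_eq_zero hsupp).symm
      _ = ∫ x in a..b, η x • h' x := (intervalIntegral.integral_of_le hab.le).symm
      _ = ∫ x in a..b, η x * h' x := by simp [smul_eq_mul]
      _ = 0 := hzero
  -- fundamental lemma of the calculus of variations
  have hae : ∀ᵐ x ∂(MeasureTheory.volume), x ∈ Ioo a b → h' x = 0 := by
    refine IsOpen.ae_eq_zero_of_integral_contDiff_smul_eq_zero isOpen_Ioo
      ((hh'cont.locallyIntegrable).locallyIntegrableOn _) ?_
    intro g hg hgsupp hgsub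
    exact main g hg hgsupp hgsub
  have hIoo : ∀ x ∈ Ioo a b, h' x = 0 := by
    by_contra hcon
    push_neg at hcon
    obtain ⟨x₀, hx₀, hx₀ne⟩ := hcon
    set U : Set ℝ := Ioo a b ∩ {x | h' x ≠ 0} with hUdef
    have hUopen : IsOpen U :=
      isOpen_Ioo.inter (isOpen_compl_singleton.preimage hh'cont)
    have hUne : U.Nonempty := ⟨x₀, hx₀, hx₀ne⟩
    have hUnull : MeasureTheory.volume U = 0 := by
      refine MeasureTheory.measure_mono_null ?_ (MeasureTheory.ae_iff.mp hae)
      intro x hx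
      simp only [Set.mem_setOf_eq, Classical.not_imp]
      exact ⟨hx.1, hx.2⟩
    exact absurd hUnull (hUopen.measure_pos MeasureTheory.volume hUne).ne'
  -- extend to the closed interval by continuity
  have hIcc : ∀ x ∈ Icc a b, h' x = 0 := by
    have heq : Set.EqOn h' 0 (closure (Ioo a b)) :=
      (Set.EqOn.closure (fun x hx => hIoo x hx) hh'cont continuous_const)
    rw [closure_Ioo hab.ne] at heq
    exact fun x hx => heq hx
  intro t ht
  have h0 : Pf t - deriv Qf t = 0 := hIcc t ht
  rw [hQeq]
  have hR : deriv (fun u => L t u (deriv y t)) (y t) = Pf t :=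
    (hpartial2 t (y t) (d t)).deriv
  rw [hR]
  linarith
end

section
/- Let L : [a,b] × ℝ × ℝ → ℝ be of class C², with partial derivatives L_t, L_y, L_v. Let y_* : [a,b] → ℝ be of class C² with y_*(a) = A and y_*(b) = B, and suppose y_* minimizes F(y) = ∫ₐᵇ L(t, y(t), y'(t)) dt among all C² functions y : [a,b] → ℝ with y(a) = A and y(b) = B. Then y_* satisfies the Du Bois-Reymond equation: there exists a constant c ∈ ℝ such that for every t ∈ [a,b], L(t, y_*(t), y_*'(t)) − y_*'(t)·L_v(t, y_*(t), y_*'(t)) = c + ∫ₐᵗ L_t(s, y_*(s), y_*'(s)) ds. -/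
open Set intervalIntegral
open MeasureTheory Metric

lemma deriv_under_integral {Φ Φ' : ℝ → ℝ → ℝ} {a b x₀ : ℝ}
    (hΦ : Continuous fun p : ℝ × ℝ => Φ p.1 p.2)
    (hΦ' : Continuous fun p : ℝ × ℝ => Φ' p.1 p.2)
    (hd : ∀ x t, HasDerivAt (fun x => Φ x t) (Φ' x t) x) :
    HasDerivAt (fun x => ∫ t in a..b, Φ x t) (∫ t in a..b, Φ' x₀ t) x₀ := by
  have hK : IsCompact ((closedBall x₀ 1) ×ˢ (uIcc a b)) :=
    (isCompact_closedBall _ _).prod isCompact_uIcc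
  obtain ⟨C, hC⟩ := hK.exists_bound_of_continuousOn hΦ'.continuousOn
  have hcont : ∀ x : ℝ, Continuous (fun t => Φ x t) := fun x =>
    hΦ.comp (continuous_const.prodMk continuous_id)
  have hcont' : ∀ x : ℝ, Continuous (fun t => Φ' x t) := fun x =>
    hΦ'.comp (continuous_const.prodMk continuous_id)
  refine (intervalIntegral.hasDerivAt_integral_of_dominated_loc_of_deriv_le
    (F := Φ) (F' := Φ') (bound := fun _ => C) (ball_mem_nhds x₀ one_pos)
    (Filter.Eventually.of_forall fun x => ((hcont x).aestronglyMeasurable).restrict)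
    ((hcont x₀).intervalIntegrable _ _)
    ((hcont' x₀).aestronglyMeasurable).restrict
    (Filter.Eventually.of_forall fun t ht x hx => ?_)
    (intervalIntegrable_const)
    (Filter.Eventually.of_forall fun t _ x _ => hd x t)).2
  exact hC (x,t) ⟨ball_subset_closedBall hx, uIoc_subset_uIcc ht⟩


lemma fund_lemma {a b : ℝ} (hab : a < b) {g : ℝ → ℝ} (hg : Continuous g)
    (h : ∀ η : ℝ → ℝ, ContDiff ℝ 2 η → η a = 0 → η b = 0 →
      (∫ t in a..b, g t * η t) = 0) :
    ∀ t ∈ Icc a b, g t = 0 := by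
  have hIoo : ∀ t ∈ Ioo a b, g t = 0 := by
    intro t₀ ht₀
    by_contra hne
    have hpos0 : 0 < g t₀ * g t₀ := mul_self_pos.2 hne
    have hcont : ContinuousAt (fun t => g t * g t₀) t₀ := (hg.mul continuous_const).continuousAt
    have h1 : ∀ᶠ t in nhds t₀, 0 < g t * g t₀ :=
      hcont.eventually (eventually_gt_nhds hpos0)
    have h2 : ∀ᶠ t in nhds t₀, t ∈ Ioo a b := (isOpen_Ioo.eventually_mem ht₀)
    obtain ⟨δ, hδ, hball⟩ := Metric.eventually_nhds_iff_ball.1 (h1.and h2)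
    -- bump function
    set f : ContDiffBump t₀ := ⟨δ/2, δ, by positivity, by linarith⟩ with hf
    have hsupp : Function.support (f : ℝ → ℝ) = ball t₀ δ := f.support_eq
    have hzero : ∀ s, s ∉ ball t₀ δ → (f : ℝ → ℝ) s = 0 := by
      intro s hs
      by_contra hzs
      exact hs (hsupp ▸ Function.mem_support.2 hzs)
    have hη := h f f.contDiff
      (hzero a fun hc => lt_irrefl a (hball a hc).2.1)
      (hzero b fun hc => lt_irrefl b (hball b hc).2.2)
    -- q := g * f * g t₀ is nonneg everywhere, positive on the ball
    set q : ℝ → ℝ := fun t => g t * f t * g t₀ with hq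
    have hqc : Continuous q := (hg.mul f.continuous).mul continuous_const
    have hqnn : ∀ t, 0 ≤ q t := by
      intro t
      by_cases htb : t ∈ ball t₀ δ
      · have := (hball t htb).1
        have hf0 : 0 ≤ (f : ℝ → ℝ) t := f.nonneg
        calc (0:ℝ) ≤ (g t * g t₀) * f t := mul_nonneg this.le hf0
        _ = q t := by ring
      · simp [hq, hzero t htb]
    have hqpos : ∀ t ∈ Ioo (t₀ - δ) (t₀ + δ), 0 < q t := by
      intro t hts
      have htb : t ∈ ball t₀ δ := by rwa [Real.ball_eq_Ioo]
      have h1 : 0 < g t * g t₀ := (hball t htb).1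
      have h2 : 0 < (f : ℝ → ℝ) t := f.pos_of_mem_ball htb
      calc (0:ℝ) < (g t * g t₀) * f t := mul_pos h1 h2
      _ = q t := by ring
    have hsub : Ioo (t₀ - δ) (t₀ + δ) ⊆ Ioo a b := by
      rw [← Real.ball_eq_Ioo]; intro x hx; exact (hball x hx).2
    have hsub' : a ≤ t₀ - δ ∧ t₀ + δ ≤ b :=
      (Set.Ioo_subset_Ioo_iff (by linarith)).1 hsub
    have hint : (∫ t in a..b, q t) = 0 := by
      rw [hq]
      simp only
      rw [intervalIntegral.integral_mul_const, hη, zero_mul]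
    have hge : (∫ t in (t₀-δ)..(t₀+δ), q t) ≤ ∫ t in a..b, q t := by
      apply intervalIntegral.integral_mono_interval hsub'.1 (by linarith) hsub'.2
      · exact Filter.Eventually.of_forall fun t => hqnn t
      · exact hqc.intervalIntegrable _ _
    have hgt : 0 < ∫ t in (t₀-δ)..(t₀+δ), q t :=
      intervalIntegral_pos_of_pos_on (hqc.intervalIntegrable _ _) hqpos (by linarith)
    linarith [hint ▸ hge]
  intro t ht
  have heq : EqOn g 0 (Ioo a b) := fun x hx => hIoo x hx
  have := (heq.closure hg continuous_const) (by rwa [closure_Ioo hab.ne] : t ∈ closure (Ioo a b))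
  simpa using this


theorem du_bois_reymond
    (a b A B : ℝ) (hab : a < b)
    (L : ℝ → ℝ → ℝ → ℝ)
    (hL : ContDiff ℝ 2 (fun p : ℝ × ℝ × ℝ => L p.1 p.2.1 p.2.2))
    (y : ℝ → ℝ) (hy : ContDiff ℝ 2 y) (hya : y a = A) (hyb : y b = B)
    (hmin : ∀ z : ℝ → ℝ, ContDiff ℝ 2 z → z a = A → z b = B →
      (∫ t in a..b, L t (y t) (deriv y t)) ≤ ∫ t in a..b, L t (z t) (deriv z t)) :
    ∃ c : ℝ, ∀ t ∈ Set.Icc a b,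
      L t (y t) (deriv y t)
          - deriv y t * deriv (fun v => L t (y t) v) (deriv y t)
        = c + ∫ s in a..t, deriv (fun τ => L τ (y s) (deriv y s)) s := by
  set F : ℝ × ℝ × ℝ → ℝ := fun p => L p.1 p.2.1 p.2.2 with hFdef
  have hF1 : ContDiff ℝ 1 F := hL.of_le (by norm_num)
  have hFdiff : Differentiable ℝ F := hF1.differentiable one_ne_zero
  have hFd : ∀ p, HasFDerivAt F (fderiv ℝ F p) p := fun p => (hFdiff p).hasFDerivAt
  set Lt : ℝ × ℝ × ℝ → ℝ := fun p => fderiv ℝ F p (1, 0, 0) with hLtdef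
  set Ly : ℝ × ℝ × ℝ → ℝ := fun p => fderiv ℝ F p (0, 1, 0) with hLydef
  set Lv : ℝ × ℝ × ℝ → ℝ := fun p => fderiv ℝ F p (0, 0, 1) with hLvdef
  -- y facts
  have hyd : Differentiable ℝ y := hy.differentiable (by norm_num)
  have hy' : ContDiff ℝ 1 (deriv y) :=
    (contDiff_succ_iff_deriv.mp (show ContDiff ℝ (1 + 1) y by norm_num; exact hy)).2.2
  have hy'd : Differentiable ℝ (deriv y) := hy'.differentiable one_ne_zero
  set γ : ℝ → ℝ × ℝ × ℝ := fun t => (t, y t, deriv y t) with hγdef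
  have hγ : ContDiff ℝ 1 γ :=
    contDiff_id.prodMk ((hy.of_le (by norm_num)).prodMk hy')
  have hγc : Continuous γ := hγ.continuous
  have hγ' : ∀ t, HasDerivAt γ (1, deriv y t, deriv (deriv y) t) t := by
    intro t
    exact (hasDerivAt_id t).prodMk (((hyd t).hasDerivAt).prodMk ((hy'd t).hasDerivAt))
  -- fderiv expansion
  have hexp : ∀ p : ℝ × ℝ × ℝ, ∀ c₁ c₂ c₃ : ℝ,
      fderiv ℝ F p (c₁, c₂, c₃) = c₁ * Lt p + c₂ * Ly p + c₃ * Lv p := by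
    intro p c₁ c₂ c₃
    have : (c₁, c₂, c₃) = c₁ • ((1:ℝ), (0:ℝ), (0:ℝ)) + c₂ • ((0:ℝ), (1:ℝ), (0:ℝ))
        + c₃ • ((0:ℝ), (0:ℝ), (1:ℝ)) := by
      simp [Prod.ext_iff]
    rw [this, map_add, map_add, (fderiv ℝ F p).map_smul, (fderiv ℝ F p).map_smul,
      (fderiv ℝ F p).map_smul]
    simp [Lt, Ly, Lv, smul_eq_mul]
  -- continuity of fderiv
  have hfdc : Continuous (fderiv ℝ F) := hL.continuous_fderiv (by norm_num)
  have hLtc : Continuous Lt := hfdc.clm_apply continuous_const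
  have hLyc : Continuous Ly := hfdc.clm_apply continuous_const
  have hLvc : Continuous Lv := hfdc.clm_apply continuous_const
  -- slice derivatives
  have hslice_v : ∀ t u v : ℝ, HasDerivAt (fun v => L t u v) (Lv (t, u, v)) v := by
    intro t u v
    have hline : HasDerivAt (fun v : ℝ => ((t, u, v) : ℝ × ℝ × ℝ)) (0, 0, 1) v :=
      (hasDerivAt_const v t).prodMk ((hasDerivAt_const v u).prodMk (hasDerivAt_id v))
    exact (hFd (t, u, v)).comp_hasDerivAt v hline
  have hslice_t : ∀ t u v : ℝ, HasDerivAt (fun τ => L τ u v) (Lt (t, u, v)) t := by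
    intro t u v
    have hline : HasDerivAt (fun τ : ℝ => ((τ, u, v) : ℝ × ℝ × ℝ)) (1, 0, 0) t :=
      (hasDerivAt_id t).prodMk ((hasDerivAt_const t u).prodMk (hasDerivAt_const t v))
    exact (hFd (t, u, v)).comp_hasDerivAt t hline
  -- P := Lv along γ, is C¹
  set P : ℝ → ℝ := fun t => Lv (γ t) with hPdef
  have hP : ContDiff ℝ 1 P := by
    have h1 : ContDiff ℝ 1 (fderiv ℝ F) := hL.fderiv_right (le_refl _)
    exact (h1.comp hγ).clm_apply contDiff_const
  have hPd : Differentiable ℝ P := hP.differentiable one_ne_zero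
  have hP'c : Continuous (deriv P) := hP.continuous_deriv le_rfl
  -- Euler-Lagrange equation
  have hEL : ∀ t ∈ Icc a b, Ly (γ t) - deriv P t = 0 := by
    have hgc : Continuous fun t => Ly (γ t) - deriv P t := (hLyc.comp hγc).sub hP'c
    refine fund_lemma hab hgc ?_
    intro η hη hηa hηb
    have hηc : Continuous η := hη.continuous
    have hηd : Differentiable ℝ η := hη.differentiable (by norm_num)
    have hη' : ContDiff ℝ 1 (deriv η) :=
      (contDiff_succ_iff_deriv.mp (show ContDiff ℝ (1 + 1) η by norm_num; exact hη)).2.2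
    have hη'c : Continuous (deriv η) := hη'.continuous
    have hη'd : Differentiable ℝ (deriv η) := hη'.differentiable one_ne_zero
    -- the varied family
    set Φ : ℝ → ℝ → ℝ :=
      fun x t => F (t, y t + x * η t, deriv y t + x * deriv η t) with hΦdef
    set Φ' : ℝ → ℝ → ℝ :=
      fun x t => fderiv ℝ F (t, y t + x * η t, deriv y t + x * deriv η t)
        ((0 : ℝ), η t, deriv η t) with hΦ'def
    have hΨ : Continuous (fun p : ℝ × ℝ =>
        ((p.2, y p.2 + p.1 * η p.2, deriv y p.2 + p.1 * deriv η p.2) : ℝ × ℝ × ℝ)) := by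
      fun_prop
    have hΦc : Continuous fun p : ℝ × ℝ => Φ p.1 p.2 := hF1.continuous.comp hΨ
    have hΦ'c : Continuous fun p : ℝ × ℝ => Φ' p.1 p.2 := by
      apply Continuous.clm_apply (hfdc.comp hΨ)
      fun_prop
    have hd : ∀ x t, HasDerivAt (fun x => Φ x t) (Φ' x t) x := by
      intro x t
      have hcurve : HasDerivAt
          (fun x : ℝ => ((t, y t + x * η t, deriv y t + x * deriv η t) : ℝ × ℝ × ℝ))
          ((0 : ℝ), η t, deriv η t) x := by
        have := (hasDerivAt_const x t).prodMk
          ((((hasDerivAt_id x).mul_const (η t)).const_add (y t)).prodMk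
            (((hasDerivAt_id x).mul_const (deriv η t)).const_add (deriv y t)))
        simpa using this
      exact (hFd _).comp_hasDerivAt x hcurve
    have hDφ : HasDerivAt (fun x => ∫ t in a..b, Φ x t) (∫ t in a..b, Φ' 0 t) 0 :=
      deriv_under_integral hΦc hΦ'c hd
    -- minimality
    have hmin' : ∀ x : ℝ, (∫ t in a..b, Φ 0 t) ≤ ∫ t in a..b, Φ x t := by
      intro x
      set z : ℝ → ℝ := fun t => y t + x * η t with hzdef
      have hz : ContDiff ℝ 2 z := hy.add (contDiff_const.mul hη)
      have hdz : ∀ t, deriv z t = deriv y t + x * deriv η t := fun t =>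
        (((hyd t).hasDerivAt).add (((hηd t).hasDerivAt).const_mul x)).deriv
      have h0 : (∫ t in a..b, Φ 0 t) = ∫ t in a..b, L t (y t) (deriv y t) := by
        apply intervalIntegral.integral_congr
        intro t _
        simp [hΦdef, hFdef]
      have hx : (∫ t in a..b, Φ x t) = ∫ t in a..b, L t (z t) (deriv z t) := by
        apply intervalIntegral.integral_congr
        intro t _
        simp only [hdz]
        simp [hΦdef, hFdef, hzdef]
      rw [h0, hx]
      exact hmin z hz (by simp [hzdef, hηa, hya]) (by simp [hzdef, hηb, hyb])
    have hloc : IsLocalMin (fun x => ∫ t in a..b, Φ x t) 0 :=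
      Filter.Eventually.of_forall hmin'
    have hzero : (∫ t in a..b, Φ' 0 t) = 0 := hloc.hasDerivAt_eq_zero hDφ
    -- first variation
    have hvar : (∫ t in a..b, (Ly (γ t) * η t + Lv (γ t) * deriv η t)) = 0 := by
      rw [← hzero]
      apply intervalIntegral.integral_congr
      intro t _
      have : ((t, y t + 0 * η t, deriv y t + 0 * deriv η t) : ℝ × ℝ × ℝ) = γ t := by
        simp [hγdef]
      simp only [hΦ'def, this, hexp, hγdef]
      ring
    -- integration by parts
    have hibp : (∫ t in a..b, (deriv P t * η t + P t * deriv η t)) = 0 := by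
      rw [integral_deriv_mul_eq_sub_of_hasDerivAt (hP.continuous.continuousOn)
        (hηc.continuousOn) (fun x _ => (hPd x).hasDerivAt) (fun x _ => (hηd x).hasDerivAt)
        (hP'c.intervalIntegrable _ _) (hη'c.intervalIntegrable _ _)]
      rw [hηa, hηb]
      ring
    have hint1 : IntervalIntegrable (fun t => Ly (γ t) * η t + Lv (γ t) * deriv η t)
        volume a b := (((hLyc.comp hγc).mul hηc).add ((hLvc.comp hγc).mul hη'c)).intervalIntegrable _ _
    have hint2 : IntervalIntegrable (fun t => deriv P t * η t + P t * deriv η t)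
        volume a b := ((hP'c.mul hηc).add (hP.continuous.mul hη'c)).intervalIntegrable _ _
    have : (∫ t in a..b, (Ly (γ t) - deriv P t) * η t)
        = (∫ t in a..b, (Ly (γ t) * η t + Lv (γ t) * deriv η t))
          - ∫ t in a..b, (deriv P t * η t + P t * deriv η t) := by
      rw [← intervalIntegral.integral_sub hint1 hint2]
      apply intervalIntegral.integral_congr
      intro t _
      simp only [hPdef]
      ring
    rw [this, hvar, hibp, sub_zero]
  -- energy function
  set E : ℝ → ℝ := fun t => F (γ t) - deriv y t * P t with hEdef
  have hE' : ∀ t, HasDerivAt E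
      (Lt (γ t) + deriv y t * (Ly (γ t) - deriv P t)) t := by
    intro t
    have h1 : HasDerivAt (fun t => F (γ t))
        (fderiv ℝ F (γ t) (1, deriv y t, deriv (deriv y) t)) t :=
      (hFd (γ t)).comp_hasDerivAt t (hγ' t)
    have h2 : HasDerivAt (fun t => deriv y t * P t)
        (deriv (deriv y) t * P t + deriv y t * deriv P t) t :=
      ((hy'd t).hasDerivAt).mul ((hPd t).hasDerivAt)
    have := h1.sub h2
    rw [hexp] at this
    refine this.congr_deriv ?_
    simp only [P, Lv]
    ring
  set I : ℝ → ℝ := fun t => ∫ s in a..t, Lt (γ s) with hIdef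
  have hI' : ∀ t, HasDerivAt I (Lt (γ t)) t := fun t =>
    ((hLtc.comp hγc).integral_hasStrictDerivAt a t).hasDerivAt
  set h : ℝ → ℝ := fun t => E t - I t with hhdef
  have hh' : ∀ t, HasDerivAt h (deriv y t * (Ly (γ t) - deriv P t)) t := by
    intro t
    have := (hE' t).sub (hI' t)
    refine this.congr_deriv ?_
    ring
  have hconst : ∀ t ∈ Icc a b, h t = h a := by
    apply constant_of_has_deriv_right_zero
    · exact fun t _ => ((hh' t).continuousAt).continuousWithinAt
    · intro t ht
      have h0 : deriv y t * (Ly (γ t) - deriv P t) = 0 := by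
        rw [hEL t (Ico_subset_Icc_self ht), mul_zero]
      exact (h0 ▸ (hh' t)).hasDerivWithinAt
  refine ⟨h a, fun t ht => ?_⟩
  have e1 : deriv (fun v => L t (y t) v) (deriv y t) = Lv (γ t) :=
    (hslice_v t (y t) (deriv y t)).deriv
  have e2 : (∫ s in a..t, deriv (fun τ => L τ (y s) (deriv y s)) s)
      = ∫ s in a..t, Lt (γ s) := by
    apply intervalIntegral.integral_congr
    intro s _
    exact (hslice_t s (y s) (deriv y s)).deriv
  rw [e1, e2, ← hconst t ht]
  simp only [hhdef, hEdef, hIdef, hPdef, hγdef, hFdef]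
  ring
end

section
/- In Manià's example with F(y) = ∫₀¹ (y(t)³ − t)² · y'(t)⁶ dt, if y : [0,1] → ℝ is absolutely continuous with y(0) = 0, y(1) = 1 and F(y) = 0, then y(t) = t^{1/3} for all t ∈ [0,1]; in particular, no Lipschitz function y with y(0) = 0 and y(1) = 1 satisfies F(y) = 0. -/
open MeasureTheory Set

/-- Manià's functional `F(y) = ∫₀¹ (y³ - t)² y'⁶ dt` with values in `[0,+∞]`. -/
noncomputable def maniaEnergy (y : ℝ → ℝ) : ENNReal :=
  ∫⁻ t in Set.Ioc (0 : ℝ) 1, ENNReal.ofReal ((y t ^ 3 - t) ^ 2 * deriv y t ^ 6)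

/-- `y` is absolutely continuous on `[0,1]`: it is the integral of a Lebesgue
integrable function. -/
def AbsCont (y : ℝ → ℝ) : Prop :=
  ∃ f : ℝ → ℝ, MeasureTheory.IntegrableOn f (Set.Icc (0 : ℝ) 1) ∧
    ∀ t ∈ Set.Icc (0 : ℝ) 1, y t = y 0 + ∫ s in (0 : ℝ)..t, f s

open Filter Metric Topology
open scoped Interval

lemma ae_hasDerivAt_primitive (g : ℝ → ℝ) (hg : Integrable g) :
    ∀ᵐ x, HasDerivAt (fun t => ∫ s in (0:ℝ)..t, g s) (g x) x := by
  filter_upwards [IsUnifLocDoublingMeasure.ae_tendsto_average_norm_sub (μ := volume)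
    hg.locallyIntegrable 1] with x hx
  rw [hasDerivAt_iff_tendsto_slope]
  have δlim : Tendsto (fun x' : ℝ => |x' - x| / 2) (𝓝[≠] x) (𝓝[>] 0) := by
    rw [tendsto_nhdsWithin_iff]
    constructor
    · have h1 := (((continuous_id.sub (continuous_const (y := x))).abs).div_const 2).tendsto x
      simp only [Pi.sub_apply, id_eq, sub_self, abs_zero, zero_div] at h1
      exact h1.mono_left nhdsWithin_le_nhds
    · filter_upwards [self_mem_nhdsWithin] with x' (hx' : x' ≠ x)
      have : x' - x ≠ 0 := sub_ne_zero.2 hx'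
      simp only [mem_Ioi]
      positivity
  have xmem : ∀ᶠ x' : ℝ in 𝓝[≠] x, x ∈ closedBall ((x + x') / 2) (1 * (|x' - x| / 2)) := by
    filter_upwards with x'
    simp only [mem_closedBall, Real.dist_eq, one_mul]
    have : |x - (x + x') / 2| = |x - x'| / 2 := by
      rw [show x - (x + x') / 2 = (x - x') / 2 by ring, abs_div]
      norm_num
    rw [this, abs_sub_comm x' x]
  have A := hx (fun x' : ℝ => (x + x') / 2) (fun x' : ℝ => |x' - x| / 2) δlim xmem
  have B : ∀ᶠ x' : ℝ in 𝓝[≠] x,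
      ‖slope (fun t => ∫ s in (0:ℝ)..t, g s) x x' - g x‖ ≤
        ⨍ y in closedBall ((x + x') / 2) (|x' - x| / 2), ‖g y - g x‖ := by
    filter_upwards [self_mem_nhdsWithin] with x' (hx' : x' ≠ x)
    have hne : x' - x ≠ 0 := sub_ne_zero.2 hx'
    have hrpos : (0:ℝ) < |x' - x| := abs_pos.2 hne
    have hball : Ι x x' ⊆ closedBall ((x + x') / 2) (|x' - x| / 2) := by
      rw [Real.closedBall_eq_Icc]
      intro s hs
      rw [mem_Icc]
      rcases le_total x x' with h | h
      · rw [uIoc_of_le h] at hs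
        rw [abs_of_nonneg (by linarith)]
        constructor <;> [linarith [hs.1]; linarith [hs.2] ]
      · rw [uIoc_of_ge h] at hs
        rw [abs_of_nonpos (by linarith)]
        constructor <;> [linarith [hs.1]; linarith [hs.2] ]
    -- slope rewriting
    have hii : ∀ a b : ℝ, IntervalIntegrable g volume a b := fun a b => hg.intervalIntegrable
    have hslope : slope (fun t => ∫ s in (0:ℝ)..t, g s) x x' - g x
        = (x' - x)⁻¹ * (∫ s in x..x', (g s - g x)) := by
      rw [slope_def_field]
      rw [intervalIntegral.integral_sub (hii x x') (intervalIntegrable_const)]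
      rw [intervalIntegral.integral_const, smul_eq_mul]
      have : (∫ s in (0:ℝ)..x', g s) - ∫ s in (0:ℝ)..x, g s = ∫ s in x..x', g s := by
        rw [intervalIntegral.integral_interval_sub_left (hii 0 x') (hii 0 x)]
      field_simp [this]
      rw [this]
    rw [hslope]
    have hmeasball : volume (closedBall ((x + x') / 2) (|x' - x| / 2)) = ENNReal.ofReal (|x' - x|) := by
      rw [Real.volume_closedBall]
      congr 1
      ring
    rw [setAverage_eq]
    have hint : IntegrableOn (fun y => ‖g y - g x‖) (closedBall ((x + x') / 2) (|x' - x| / 2)) := by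
      refine (hg.integrableOn.sub (integrableOn_const ?_)).norm
      exact measure_closedBall_lt_top.ne
    have hIoc : (∫ s in Ι x x', ‖g s - g x‖) ≤
        ∫ y in closedBall ((x + x') / 2) (|x' - x| / 2), ‖g y - g x‖ := by
      apply setIntegral_mono_set hint
      · filter_upwards with s using norm_nonneg _
      · exact HasSubset.Subset.eventuallyLE hball
    have h1 : ‖(x' - x)⁻¹ * (∫ s in x..x', (g s - g x))‖
        ≤ |x' - x|⁻¹ * ∫ s in Ι x x', ‖g s - g x‖ := by
      rw [norm_mul, norm_inv, Real.norm_eq_abs]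
      gcongr
      exact intervalIntegral.norm_integral_le_integral_norm_uIoc
    refine h1.trans ?_
    rw [measureReal_def, hmeasball, ENNReal.toReal_ofReal hrpos.le, smul_eq_mul]
    exact mul_le_mul_of_nonneg_left hIoc (by positivity)
  have C := squeeze_zero_norm' B A
  exact tendsto_sub_nhds_zero_iff.mp C

lemma mania_ac (y : ℝ → ℝ) (hAC : AbsCont y) (h0 : y 0 = 0) (h1 : y 1 = 1)
    (hE : maniaEnergy y = 0) : ∀ t ∈ Icc (0:ℝ) 1, y t = t ^ ((1:ℝ)/3) := by
  obtain ⟨f, hf, hrep⟩ := hAC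
  set g : ℝ → ℝ := (Icc (0:ℝ) 1).indicator f with hgdef
  have hg : Integrable g := hf.integrable_indicator measurableSet_Icc
  set Y : ℝ → ℝ := fun t => ∫ s in (0:ℝ)..t, g s with hYdef
  have hzy : ∀ t ∈ Icc (0:ℝ) 1, y t = Y t := by
    intro t ht
    rw [hrep t ht, h0, zero_add]
    have h0t : (0:ℝ) ≤ t := ht.1
    show (∫ s in (0:ℝ)..t, f s) = ∫ s in (0:ℝ)..t, g s
    rw [intervalIntegral.integral_of_le h0t, intervalIntegral.integral_of_le h0t]
    apply setIntegral_congr_fun measurableSet_Ioc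
    intro s hs
    have hmem : s ∈ Icc (0:ℝ) 1 := ⟨hs.1.le, hs.2.trans ht.2⟩
    exact (Set.indicator_of_mem hmem f).symm
  have hYcont : Continuous Y :=
    intervalIntegral.continuous_primitive (fun a b => hg.intervalIntegrable) 0
  have hY0 : Y 0 = 0 := intervalIntegral.integral_same
  have hY1 : Y 1 = 1 := by rw [← hzy 1 ⟨zero_le_one, le_rfl⟩, h1]
  have hD : ∀ᵐ x, HasDerivAt Y (g x) x := ae_hasDerivAt_primitive g hg
  -- energy gives pointwise condition a.e. on Ioo 0 1
  have hmeas : Measurable (fun t => ENNReal.ofReal ((Y t ^ 3 - t) ^ 2 * deriv y t ^ 6)) := by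
    apply ENNReal.measurable_ofReal.comp
    exact ((((hYcont.pow 3).sub continuous_id).pow 2).measurable).mul
      ((measurable_deriv y).pow_const 6)
  have heq : (fun t => ENNReal.ofReal ((y t ^ 3 - t) ^ 2 * deriv y t ^ 6))
      =ᵐ[volume.restrict (Ioc (0:ℝ) 1)]
      (fun t => ENNReal.ofReal ((Y t ^ 3 - t) ^ 2 * deriv y t ^ 6)) := by
    filter_upwards [ae_restrict_mem measurableSet_Ioc] with t ht
    rw [hzy t ⟨ht.1.le, ht.2⟩]
  have hzero : ∀ᵐ t ∂(volume.restrict (Ioc (0:ℝ) 1)),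
      ENNReal.ofReal ((Y t ^ 3 - t) ^ 2 * deriv y t ^ 6) = 0 := by
    have h2 : ∫⁻ t in Ioc (0:ℝ) 1, ENNReal.ofReal ((Y t ^ 3 - t) ^ 2 * deriv y t ^ 6) = 0 := by
      rw [← lintegral_congr_ae heq]; exact hE
    exact (lintegral_eq_zero_iff hmeas).mp h2
  have key : ∀ᵐ t ∂(volume.restrict (Ioo (0:ℝ) 1)), Y t ^ 3 - t = 0 ∨ g t = 0 := by
    have hD' : ∀ᵐ t ∂(volume.restrict (Ioo (0:ℝ) 1)), HasDerivAt Y (g t) t :=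
      ae_restrict_of_ae hD
    have hz' : ∀ᵐ t ∂(volume.restrict (Ioo (0:ℝ) 1)),
        ENNReal.ofReal ((Y t ^ 3 - t) ^ 2 * deriv y t ^ 6) = 0 :=
      ae_restrict_of_ae_restrict_of_subset Ioo_subset_Ioc_self hzero
    filter_upwards [hD', hz', ae_restrict_mem measurableSet_Ioo] with t hDt hzt hmem
    -- deriv y t = g t
    have hyd : HasDerivAt y (g t) t := by
      apply hDt.congr_of_eventuallyEq
      filter_upwards [isOpen_Ioo.mem_nhds hmem] with s hs
      exact hzy s ⟨hs.1.le, hs.2.le⟩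
    have hder : deriv y t = g t := hyd.deriv
    rw [hder] at hzt
    rw [ENNReal.ofReal_eq_zero] at hzt
    have hge : 0 ≤ (Y t ^ 3 - t) ^ 2 * g t ^ 6 := by positivity
    have h0' : (Y t ^ 3 - t) ^ 2 * g t ^ 6 = 0 := le_antisymm hzt hge
    rcases mul_eq_zero.mp h0' with h' | h'
    · refine Or.inl ?_
      exact (pow_eq_zero_iff two_ne_zero).mp h'
    · refine Or.inr ?_
      exact (pow_eq_zero_iff (by norm_num : (6:ℕ) ≠ 0)).mp h'
  -- main claim
  have main : ∀ t ∈ Icc (0:ℝ) 1, Y t ^ 3 = t := by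
    by_contra hcon
    push_neg at hcon
    obtain ⟨t0, ht0, hne⟩ := hcon
    set h : ℝ → ℝ := fun t => Y t ^ 3 - t with hhdef
    have hhcont : Continuous h := (hYcont.pow 3).sub continuous_id
    have hh0 : h 0 = 0 := by simp [hhdef, hY0]
    have hh1 : h 1 = 0 := by simp [hhdef, hY1]
    have hht0 : h t0 ≠ 0 := sub_ne_zero.2 hne
    set A : Set ℝ := Icc 0 t0 ∩ h ⁻¹' {0} with hAdef
    set B : Set ℝ := Icc t0 1 ∩ h ⁻¹' {0} with hBdef
    have hAcomp : IsCompact A :=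
      isCompact_Icc.inter_right (isClosed_singleton.preimage hhcont)
    have hBcomp : IsCompact B :=
      isCompact_Icc.inter_right (isClosed_singleton.preimage hhcont)
    have hAne : A.Nonempty := ⟨0, ⟨le_rfl, ht0.1⟩, by simpa using hh0⟩
    have hBne : B.Nonempty := ⟨1, ⟨ht0.2, le_rfl⟩, by simpa using hh1⟩
    set a := sSup A with hadef
    set b := sInf B with hbdef
    have haA : a ∈ A := hAcomp.sSup_mem hAne
    have hbB : b ∈ B := hBcomp.sInf_mem hBne
    have hat0 : a < t0 := lt_of_le_of_ne haA.1.2 (fun he => hht0 (he ▸ haA.2))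
    have ht0b : t0 < b := lt_of_le_of_ne hbB.1.1 (fun he => hht0 (by rw [he]; exact hbB.2))
    have hab : a < b := hat0.trans ht0b
    have ha0 : (0:ℝ) ≤ a := haA.1.1
    have hb1 : b ≤ 1 := hbB.1.2
    have hno : ∀ s ∈ Ioo a b, h s ≠ 0 := by
      intro s hs hs0
      rcases le_total s t0 with hle | hle
      · have hsA : s ∈ A := ⟨⟨ha0.trans hs.1.le, hle⟩, hs0⟩
        exact absurd (le_csSup hAcomp.bddAbove hsA) (not_le.2 hs.1)
      · have hsB : s ∈ B := ⟨⟨hle, hs.2.le.trans hb1⟩, hs0⟩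
        exact absurd (csInf_le hBcomp.bddBelow hsB) (not_le.2 hs.2)
    have hsubIoo : Ioo a b ⊆ Ioo (0:ℝ) 1 := fun s hs =>
      ⟨lt_of_le_of_lt ha0 hs.1, lt_of_lt_of_le hs.2 hb1⟩
    have hg0 : ∀ᵐ s ∂(volume.restrict (Ioo a b)), g s = 0 := by
      filter_upwards [ae_restrict_of_ae_restrict_of_subset hsubIoo key,
        ae_restrict_mem measurableSet_Ioo] with s hs hmem
      rcases hs with h' | h'
      · exact absurd h' (hno s hmem)
      · exact h'
    have hint0 : ∫ s in a..b, g s = 0 := by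
      rw [intervalIntegral.integral_of_le hab.le]
      rw [← setIntegral_congr_set Ioo_ae_eq_Ioc]
      exact integral_eq_zero_of_ae hg0
    have hYab : Y b = Y a := by
      have hsub : Y b - Y a = ∫ s in a..b, g s := by
        rw [intervalIntegral.integral_interval_sub_left hg.intervalIntegrable
          hg.intervalIntegrable]
      have := hsub.trans hint0
      linarith
    have hha : Y a ^ 3 - a = 0 := haA.2
    have hhb : Y b ^ 3 - b = 0 := hbB.2
    rw [hYab] at hhb
    have : a = b := by nlinarith [hha, hhb]
    exact absurd this hab.ne
  intro t ht
  have hy3 : Y t ^ 3 = t := main t ht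
  have hrt : (t ^ ((1:ℝ)/3)) ^ 3 = t := by
    rw [← Real.rpow_natCast (t ^ ((1:ℝ)/3)) 3, ← Real.rpow_mul ht.1]
    norm_num
  have hinj : Function.Injective (fun a : ℝ => a ^ 3) :=
    (Odd.strictMono_pow (⟨1, by norm_num⟩ : Odd 3)).injective
  rw [hzy t ht]
  apply hinj
  show Y t ^ 3 = (t ^ ((1:ℝ)/3)) ^ 3
  rw [hy3, hrt]

lemma lipschitz_absCont {K : NNReal} {y : ℝ → ℝ}
    (hK : LipschitzOnWith K y (Icc (0:ℝ) 1)) : AbsCont y := by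
  obtain ⟨z, hz, hyz⟩ := hK.extend_real
  set k : ℝ := (K : ℝ) with hkdef
  have hk0 : 0 ≤ k := K.coe_nonneg
  have hzcont : Continuous z := hz.continuous
  have hlip : ∀ s t : ℝ, |z s - z t| ≤ k * |s - t| := by
    intro s t
    have h := hz.dist_le_mul s t
    rwa [Real.dist_eq, Real.dist_eq] at h
  have hwmono : Monotone (fun t => z t + k * t) := by
    intro s t hst
    have h1 := (abs_le.1 (hlip t s)).1
    rw [abs_of_nonneg (by linarith : (0:ℝ) ≤ t - s)] at h1
    simp only
    ring_nf at h1 ⊢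
    linarith
  have hvmono : Monotone (fun t => k * t - z t) := by
    intro s t hst
    have h1 := (abs_le.1 (hlip t s)).2
    rw [abs_of_nonneg (by linarith : (0:ℝ) ≤ t - s)] at h1
    simp only
    ring_nf at h1 ⊢
    linarith
  set S : StieltjesFunction ℝ := ⟨fun t => z t + k * t, hwmono,
    fun _ => ((hzcont.add (continuous_const.mul continuous_id)).continuousAt).continuousWithinAt⟩
    with hSdef
  set T : StieltjesFunction ℝ := ⟨fun t => k * t - z t, hvmono,
    fun _ => (((continuous_const.mul continuous_id).sub hzcont).continuousAt).continuousWithinAt⟩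
    with hTdef
  have hSIoc : ∀ a b : ℝ, S.measure (Ioc a b) = ENNReal.ofReal ((z b + k * b) - (z a + k * a)) :=
    fun a b => S.measure_Ioc a b
  have hlf : IsLocallyFiniteMeasure (S.measure + T.measure) := by
    constructor
    intro x
    obtain ⟨s1, hs1, hs1'⟩ := S.measure.finiteAt_nhds x
    obtain ⟨s2, hs2, hs2'⟩ := T.measure.finiteAt_nhds x
    refine ⟨s1 ∩ s2, Filter.inter_mem hs1 hs2, ?_⟩
    rw [Measure.add_apply]
    exact ENNReal.add_lt_top.2 ⟨lt_of_le_of_lt (measure_mono inter_subset_left) hs1',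
      lt_of_le_of_lt (measure_mono inter_subset_right) hs2'⟩
  have hsum : S.measure + T.measure = (ENNReal.ofReal (2 * k)) • volume := by
    refine Measure.ext_of_Ioc _ _ (fun a b hab => ?_)
    rw [Measure.add_apply, hSIoc, T.measure_Ioc, Measure.smul_apply,
      Real.volume_Ioc, smul_eq_mul, ← ENNReal.ofReal_mul (by positivity)]
    rw [← ENNReal.ofReal_add (sub_nonneg.2 (hwmono hab.le)) (sub_nonneg.2 (hvmono hab.le))]
    congr 1
    show (z b + k*b) - (z a + k*a) + ((k*b - z b) - (k*a - z a)) = 2*k*(b-a)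
    ring
  have hac : S.measure ≪ volume := by
    intro s hs
    have h1 : S.measure s ≤ (S.measure + T.measure) s := by
      rw [Measure.add_apply]; exact le_self_add
    rw [hsum, Measure.smul_apply, hs, smul_eq_mul, mul_zero] at h1
    exact le_antisymm h1 zero_le
  set ρ : ℝ → ℝ := fun x => (S.measure.rnDeriv volume x).toReal with hρdef
  have hwd : volume.withDensity (S.measure.rnDeriv volume) = S.measure :=
    Measure.withDensity_rnDeriv_eq _ _ hac
  have hρmeas := Measure.measurable_rnDeriv S.measure volume
  have hρint : IntegrableOn ρ (Icc (0:ℝ) 1) := by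
    apply integrable_toReal_of_lintegral_ne_top (hρmeas.aemeasurable.restrict)
    rw [← withDensity_apply _ measurableSet_Icc, hwd]
    exact (isCompact_Icc.measure_lt_top).ne
  have hFTC : ∀ t ∈ Icc (0:ℝ) 1, ∫ s in (0:ℝ)..t, ρ s = (z t + k * t) - (z 0 + k * 0) := by
    intro t ht
    rw [intervalIntegral.integral_of_le ht.1]
    have h1 : ∫ s in Ioc (0:ℝ) t, ρ s = (S.measure (Ioc 0 t)).toReal := by
      rw [integral_toReal (hρmeas.aemeasurable.restrict)
        (ae_restrict_of_ae (Measure.rnDeriv_lt_top S.measure volume))]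
      rw [← withDensity_apply _ measurableSet_Ioc, hwd]
    rw [h1, hSIoc, ENNReal.toReal_ofReal (sub_nonneg.2 (hwmono ht.1))]
  refine ⟨fun x => ρ x - k, ?_, ?_⟩
  · exact hρint.sub (integrableOn_const measure_Icc_lt_top.ne)
  · intro t ht
    have hzt : y t = z t := hyz ht
    have hz0 : y 0 = z 0 := hyz ⟨le_rfl, zero_le_one⟩
    have hρii : IntervalIntegrable ρ volume 0 t := by
      apply IntegrableOn.intervalIntegrable
      apply hρint.mono_set
      rw [uIcc_of_le ht.1]
      exact Icc_subset_Icc le_rfl ht.2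
    rw [intervalIntegral.integral_sub hρii intervalIntegrable_const,
      intervalIntegral.integral_const, hFTC t ht, hzt, hz0]
    simp only [smul_eq_mul]
    ring


theorem mania_unique_minimizer_no_lipschitz :
    (∀ y : ℝ → ℝ, AbsCont y → y 0 = 0 → y 1 = 1 → maniaEnergy y = 0 →
      ∀ t ∈ Set.Icc (0 : ℝ) 1, y t = t ^ ((1 : ℝ) / 3)) ∧
    ¬ ∃ y : ℝ → ℝ, (∃ K : NNReal, LipschitzOnWith K y (Set.Icc (0 : ℝ) 1)) ∧
      y 0 = 0 ∧ y 1 = 1 ∧ maniaEnergy y = 0 := by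
  refine ⟨mania_ac, ?_⟩
  rintro ⟨y, ⟨K, hK⟩, h0, h1, hE⟩
  have hy := mania_ac y (lipschitz_absCont hK) h0 h1 hE
  set k : ℝ := (K : ℝ) with hkdef
  have hk0 : 0 ≤ k := K.coe_nonneg
  have hk1 : (0:ℝ) < k + 1 := by linarith
  set t : ℝ := min 1 ((k+1)⁻¹ ^ 3) with htdef
  have ht0 : 0 < t := lt_min one_pos (by positivity)
  have ht1 : t ≤ 1 := min_le_left _ _
  have htmem : t ∈ Set.Icc (0:ℝ) 1 := ⟨ht0.le, ht1⟩
  have hyt : y t = t ^ ((1:ℝ)/3) := hy t htmem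
  have hl := hK.dist_le_mul t htmem 0 ⟨le_rfl, zero_le_one⟩
  rw [Real.dist_eq, Real.dist_eq, hyt, h0, sub_zero, sub_zero,
    abs_of_nonneg (Real.rpow_nonneg ht0.le _), abs_of_pos ht0] at hl
  have hcube : (t ^ ((1:ℝ)/3)) ^ 3 = t := by
    rw [← Real.rpow_natCast (t ^ ((1:ℝ)/3)) 3, ← Real.rpow_mul ht0.le]
    norm_num
  have h3 : t ≤ (k*t)^3 := by
    calc t = (t ^ ((1:ℝ)/3)) ^ 3 := hcube.symm
    _ ≤ (k*t)^3 := pow_le_pow_left₀ (Real.rpow_nonneg ht0.le _) hl 3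
  have htle : t ≤ ((k+1)^3)⁻¹ := by
    rw [← inv_pow]; exact min_le_right _ _
  have h4 : t * (k+1)^3 ≤ 1 := by
    calc t * (k+1)^3 ≤ ((k+1)^3)⁻¹ * (k+1)^3 :=
          mul_le_mul_of_nonneg_right htle (by positivity)
    _ = 1 := inv_mul_cancel₀ (by positivity)
  have h5 : 1 ≤ k^3 * t^2 := by nlinarith [h3, ht0]
  have h6 : t^2 * (k+1)^6 ≤ 1 := by
    nlinarith [h4, mul_nonneg ht0.le (pow_nonneg hk1.le 3),
      mul_nonneg (sub_nonneg.2 h4) (by positivity : (0:ℝ) ≤ t*(k+1)^3 + 1)]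
  have h7 : k^3 < (k+1)^6 := by
    have ha : (k+1)^3 ≤ (k+1)^6 := pow_le_pow_right₀ (by linarith) (by norm_num)
    have hb : k^3 < (k+1)^3 := by nlinarith [sq_nonneg k, hk0]
    linarith
  nlinarith [h5, h6, h7, pow_pos ht0 2]
end

section
/- Let F(y) = ∫₀¹ ((y'(t)² − 1)² + y(t)²) dt. The infimum of F over absolutely continuous functions y : [0,1] → ℝ with y(0) = 0 and y(1) = 0 equals 0; indeed, for each n ≥ 2 the 'sawtooth' function y_n with y_n(0) = 0 and y_n' = 1 on [2k/(2n), (2k+1)/(2n)) and y_n' = −1 on [(2k+1)/(2n), (2k+2)/(2n)) for k = 0,…,n−1 is Lipschitz, satisfies the boundary conditions, and F(y_n) ≤ 1/(4n²). -/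
open MeasureTheory Set

/-- The functional `F(y) = ∫₀¹ ((y'² - 1)² + y²) dt` with values in `[0,+∞]`. -/
noncomputable def energyST (y : ℝ → ℝ) : ENNReal :=
  ∫⁻ t in Set.Ioc (0 : ℝ) 1, ENNReal.ofReal ((deriv y t ^ 2 - 1) ^ 2 + y t ^ 2)

/-- The sawtooth with `n` teeth: the distance from `t` to the nearest multiple of `1/n`;
it satisfies `y_n(0) = 0`, `y_n' = 1` on each `[2k/(2n), (2k+1)/(2n))` and `y_n' = -1`
on each `[(2k+1)/(2n), (2k+2)/(2n))`, `k = 0,…,n-1`. -/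
noncomputable def sawtooth (n : ℕ) (t : ℝ) : ℝ :=
  |t - (round ((n : ℝ) * t) : ℤ) / (n : ℝ)|


lemma round_mem (x : ℝ) : (round x : ℝ) - 1/2 ≤ x ∧ x < (round x : ℝ) + 1/2 := by
  rw [round_eq]
  constructor
  · have := Int.floor_le (x + 1/2); push_cast at this ⊢; linarith
  · have := Int.lt_floor_add_one (x + 1/2); push_cast at this ⊢; linarith

lemma round_eq_of_mem {x : ℝ} {r : ℤ} (h1 : (r:ℝ) - 1/2 ≤ x) (h2 : x < (r:ℝ) + 1/2) :
    round x = r := by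
  rw [round_eq]
  exact Int.floor_eq_iff.mpr ⟨by push_cast; linarith, by push_cast; linarith⟩

lemma sawtooth_le {n : ℕ} (hn : 0 < n) (t : ℝ) : sawtooth n t ≤ 1 / (2 * n) := by
  have hc : (0:ℝ) < n := by exact_mod_cast hn
  have h := abs_sub_round ((n:ℝ) * t)
  have habs : ∀ (s : ℝ) (r : ℤ), |s - (r:ℝ) / (n:ℝ)| = |(n:ℝ) * s - r| / n := by
    intro s r
    have : s - (r:ℝ)/(n:ℝ) = ((n:ℝ)*s - r)/n := by field_simp
    rw [this, abs_div, abs_of_pos hc]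
  have : sawtooth n t = |(n:ℝ) * t - round ((n:ℝ)*t)| / n := habs t _
  rw [this]
  rw [div_le_div_iff₀ hc (by positivity)]
  calc |(n:ℝ) * t - round ((n:ℝ)*t)| * (2*n) ≤ (1/2) * (2*n) := by
        apply mul_le_mul_of_nonneg_right h (by positivity)
    _ = 1 * n := by ring
  
lemma sawtooth_lipschitz {n : ℕ} (hn : 0 < n) : LipschitzWith 1 (sawtooth n) := by
  have hc : (0:ℝ) < n := by exact_mod_cast hn
  have key : ∀ s t : ℝ, sawtooth n s - sawtooth n t ≤ |s - t| := by
    intro s t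
    have h1 : sawtooth n s ≤ |s - (round ((n:ℝ)*t) : ℤ) / (n:ℝ)| := by
      rw [sawtooth]
      have h2 := round_le ((n:ℝ)*s) (round ((n:ℝ)*t))
      have habs : ∀ (s : ℝ) (r : ℤ), |s - (r:ℝ) / (n:ℝ)| = |(n:ℝ) * s - r| / n := by
        intro s r
        have : s - (r:ℝ)/(n:ℝ) = ((n:ℝ)*s - r)/n := by field_simp
        rw [this, abs_div, abs_of_pos hc]
      rw [habs, habs]
      gcongr
    have h3 : |s - (round ((n:ℝ)*t) : ℤ) / (n:ℝ)| ≤ |s - t| + sawtooth n t := by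
      rw [sawtooth]
      calc |s - (round ((n:ℝ)*t) : ℤ) / (n:ℝ)|
          = |(s - t) + (t - (round ((n:ℝ)*t) : ℤ) / (n:ℝ))| := by ring_nf
        _ ≤ _ := abs_add_le _ _
    linarith
  refine LipschitzWith.of_dist_le_mul fun s t => ?_
  rw [Real.dist_eq, Real.dist_eq]
  push_cast
  rw [one_mul, abs_sub_le_iff]
  constructor
  · exact key s t
  · have := key t s
    rwa [abs_sub_comm] at this

noncomputable def sawSlope (n : ℕ) (t : ℝ) : ℝ :=
  if ((round ((n:ℝ)*t)):ℝ) ≤ (n:ℝ)*t then 1 else -1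

lemma sawSlope_measurable (n : ℕ) : Measurable (sawSlope n) := by
  unfold sawSlope
  have hr : Measurable (fun t : ℝ => ((round ((n:ℝ)*t)):ℝ)) := by
    have : (fun t : ℝ => ((round ((n:ℝ)*t)):ℝ)) =
        (fun t : ℝ => ((⌊(n:ℝ)*t + 1/2⌋ : ℤ) : ℝ)) := by
      funext t; rw [round_eq]
    rw [this]
    exact Measurable.comp (measurable_from_top (f := (Int.cast : ℤ → ℝ)))
      (Int.measurable_floor.comp (by fun_prop))
  exact Measurable.ite (measurableSet_le hr (by fun_prop)) measurable_const measurable_const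

lemma sawSlope_bound (n : ℕ) (t : ℝ) : |sawSlope n t| ≤ 1 := by
  unfold sawSlope; split <;> simp

/-- local form: if round(n s) = r for s near t within filter l, plus sign info -/
lemma sawtooth_hasDerivWithinAt {n : ℕ} (hn : 0 < n) (t : ℝ) :
    HasDerivWithinAt (sawtooth n) (sawSlope n t) (Set.Ioi t) t := by
  have hc : (0:ℝ) < n := by exact_mod_cast hn
  set r : ℤ := round ((n:ℝ)*t) with hr
  obtain ⟨hm1, hm2⟩ := round_mem ((n:ℝ)*t)
  rw [← hr] at hm1 hm2
  by_cases hcase : ((r:ℝ)) ≤ (n:ℝ)*t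
  · -- slope 1
    have hslope : sawSlope n t = 1 := by rw [sawSlope, if_pos hcase]
    rw [hslope]
    set δ : ℝ := ((r:ℝ) + 1/2 - (n:ℝ)*t) / n with hδ
    have hδpos : 0 < δ := by
      apply div_pos _ hc; linarith
    have hev : ∀ s ∈ Set.Ioo t (t + δ), sawtooth n s = s - (r:ℝ)/n := by
      intro s hs
      have h1 : (n:ℝ)*s > (n:ℝ)*t := by
        have := hs.1; nlinarith
      have h2 : (n:ℝ)*s < (r:ℝ) + 1/2 := by
        have := hs.2
        have : (n:ℝ)*s < (n:ℝ)*(t + δ) := by nlinarith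
        rw [hδ] at this
        calc (n:ℝ)*s < (n:ℝ)*(t + ((r:ℝ) + 1/2 - (n:ℝ)*t)/n) := this
          _ = (r:ℝ) + 1/2 := by field_simp; ring
      have hrnd : round ((n:ℝ)*s) = r := round_eq_of_mem (by linarith) h2
      rw [sawtooth, hrnd, abs_of_pos]
      have : (r:ℝ)/n < s := by
        rw [div_lt_iff₀ hc]; nlinarith
      linarith
    have hval : sawtooth n t = t - (r:ℝ)/n := by
      rw [sawtooth, ← hr, abs_of_nonneg]
      have : (r:ℝ)/n ≤ t := by rw [div_le_iff₀ hc]; nlinarith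
      linarith
    have hd : HasDerivWithinAt (fun s => s - (r:ℝ)/n) 1 (Set.Ioi t) t :=
      (hasDerivWithinAt_id t _).sub_const _
    refine hd.congr_of_eventuallyEq ?_ hval
    filter_upwards [Ioo_mem_nhdsGT_of_mem ⟨le_refl t, lt_add_of_pos_right t hδpos⟩] with s hs
    exact hev s hs
  · -- slope -1
    push_neg at hcase
    have hslope : sawSlope n t = -1 := by rw [sawSlope, if_neg (not_le.mpr hcase)]
    rw [hslope]
    set δ : ℝ := ((r:ℝ) - (n:ℝ)*t) / n with hδ
    have hδpos : 0 < δ := by apply div_pos _ hc; linarith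
    have hev : ∀ s ∈ Set.Ioo t (t + δ), sawtooth n s = (r:ℝ)/n - s := by
      intro s hs
      have h1 : (n:ℝ)*s > (n:ℝ)*t := by have := hs.1; nlinarith
      have h2 : (n:ℝ)*s < (r:ℝ) := by
        have := hs.2
        have h3 : (n:ℝ)*s < (n:ℝ)*(t + δ) := by nlinarith
        rw [hδ] at h3
        calc (n:ℝ)*s < (n:ℝ)*(t + ((r:ℝ) - (n:ℝ)*t)/n) := h3
          _ = (r:ℝ) := by field_simp; ring
      have hrnd : round ((n:ℝ)*s) = r := round_eq_of_mem (by linarith) (by linarith)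
      rw [sawtooth, hrnd, abs_of_neg]
      · ring
      have : s < (r:ℝ)/n := by rw [lt_div_iff₀ hc]; nlinarith
      linarith
    have hval : sawtooth n t = (r:ℝ)/n - t := by
      rw [sawtooth, ← hr, abs_of_neg]
      · ring
      have : t < (r:ℝ)/n := by rw [lt_div_iff₀ hc]; nlinarith
      linarith
    have hd : HasDerivWithinAt (fun s => (r:ℝ)/n - s) (-1) (Set.Ioi t) t := by
      simpa using (hasDerivWithinAt_id t (Set.Ioi t)).const_sub ((r:ℝ)/n)
    refine hd.congr_of_eventuallyEq ?_ hval
    filter_upwards [Ioo_mem_nhdsGT_of_mem ⟨le_refl t, lt_add_of_pos_right t hδpos⟩] with s hs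
    exact hev s hs

lemma sawtooth_hasDerivAt {n : ℕ} (hn : 0 < n) {t : ℝ}
    (ht : ∀ k : ℤ, 2*(n:ℝ)*t ≠ (k:ℝ)) :
    ∃ d : ℝ, d^2 = 1 ∧ HasDerivAt (sawtooth n) d t := by
  have hc : (0:ℝ) < n := by exact_mod_cast hn
  set r : ℤ := round ((n:ℝ)*t) with hr
  obtain ⟨hm1, hm2⟩ := round_mem ((n:ℝ)*t)
  rw [← hr] at hm1 hm2
  have hne : (n:ℝ)*t ≠ (r:ℝ) := by
    intro h
    exact ht (2*r) (by push_cast; linarith)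
  have hne2 : (n:ℝ)*t ≠ (r:ℝ) - 1/2 := by
    intro h
    exact ht (2*r - 1) (by push_cast; linarith)
  by_cases hcase : ((r:ℝ)) < (n:ℝ)*t
  · refine ⟨1, by norm_num, ?_⟩
    set δ : ℝ := min ((n:ℝ)*t - r) ((r:ℝ) + 1/2 - (n:ℝ)*t) / n with hδ
    have hδpos : 0 < δ := by
      apply div_pos _ hc
      apply lt_min <;> linarith
    have hev : ∀ s ∈ Set.Ioo (t - δ) (t + δ), sawtooth n s = s - (r:ℝ)/n := by
      intro s hs
      have h1 : (n:ℝ)*s > (r:ℝ) := by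
        have h := hs.1
        have : (n:ℝ)*(t - δ) < (n:ℝ)*s := by nlinarith
        have hmin : (n:ℝ)*δ ≤ (n:ℝ)*t - r := by
          rw [hδ, mul_div_cancel₀ _ (ne_of_gt hc)]; exact min_le_left _ _
        nlinarith
      have h2 : (n:ℝ)*s < (r:ℝ) + 1/2 := by
        have h := hs.2
        have : (n:ℝ)*s < (n:ℝ)*(t + δ) := by nlinarith
        have hmin : (n:ℝ)*δ ≤ (r:ℝ) + 1/2 - (n:ℝ)*t := by
          rw [hδ, mul_div_cancel₀ _ (ne_of_gt hc)]; exact min_le_right _ _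
        nlinarith
      have hrnd : round ((n:ℝ)*s) = r := round_eq_of_mem (by linarith) h2
      rw [sawtooth, hrnd, abs_of_pos]
      have : (r:ℝ)/n < s := by rw [div_lt_iff₀ hc]; nlinarith
      linarith
    have hd : HasDerivAt (fun s => s - (r:ℝ)/n) 1 t := (hasDerivAt_id t).sub_const _
    refine hd.congr_of_eventuallyEq ?_
    filter_upwards [Ioo_mem_nhds (show t - δ < t by linarith) (show t < t + δ by linarith)] with s hs
    exact hev s hs
  · have hcase' : (n:ℝ)*t < r := lt_of_le_of_ne (not_lt.mp hcase) hne
    refine ⟨-1, by norm_num, ?_⟩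
    set δ : ℝ := min ((r:ℝ) - (n:ℝ)*t) ((n:ℝ)*t - ((r:ℝ) - 1/2)) / n with hδ
    have hδpos : 0 < δ := by
      apply div_pos _ hc
      apply lt_min
      · linarith
      · cases lt_or_eq_of_le hm1 with
        | inl h => linarith
        | inr h => exact absurd h.symm hne2
    have hm1' : (r:ℝ) - 1/2 < (n:ℝ)*t := lt_of_le_of_ne hm1 (Ne.symm hne2)
    have hev : ∀ s ∈ Set.Ioo (t - δ) (t + δ), sawtooth n s = (r:ℝ)/n - s := by
      intro s hs
      have h1 : (n:ℝ)*s < (r:ℝ) := by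
        have h := hs.2
        have : (n:ℝ)*s < (n:ℝ)*(t + δ) := by nlinarith
        have hmin : (n:ℝ)*δ ≤ (r:ℝ) - (n:ℝ)*t := by
          rw [hδ, mul_div_cancel₀ _ (ne_of_gt hc)]; exact min_le_left _ _
        nlinarith
      have h2 : (r:ℝ) - 1/2 < (n:ℝ)*s := by
        have h := hs.1
        have : (n:ℝ)*(t - δ) < (n:ℝ)*s := by nlinarith
        have hmin : (n:ℝ)*δ ≤ (n:ℝ)*t - ((r:ℝ) - 1/2) := by
          rw [hδ, mul_div_cancel₀ _ (ne_of_gt hc)]; exact min_le_right _ _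
        nlinarith
      have hrnd : round ((n:ℝ)*s) = r := round_eq_of_mem (by linarith) (by linarith)
      rw [sawtooth, hrnd, abs_of_neg]
      · ring
      have : s < (r:ℝ)/n := by rw [lt_div_iff₀ hc]; nlinarith
      linarith
    have hd : HasDerivAt (fun s => (r:ℝ)/n - s) (-1) t := by
      simpa using (hasDerivAt_id t).const_sub ((r:ℝ)/n)
    refine hd.congr_of_eventuallyEq ?_
    filter_upwards [Ioo_mem_nhds (show t - δ < t by linarith) (show t < t + δ by linarith)] with s hs
    exact hev s hs

lemma sawtooth_zero (n : ℕ) : sawtooth n 0 = 0 := by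
  simp [sawtooth]

lemma sawSlope_integrableOn (n : ℕ) : IntegrableOn (sawSlope n) (Set.Icc (0:ℝ) 1) := by
  apply Measure.integrableOn_of_bounded (M := 1)
  · exact (measure_Icc_lt_top).ne
  · exact (sawSlope_measurable n).aestronglyMeasurable
  · exact Filter.Eventually.of_forall fun t => by
      rw [Real.norm_eq_abs]; exact sawSlope_bound n t

lemma sawtooth_absCont {n : ℕ} (hn : 0 < n) : AbsCont (sawtooth n) := by
  refine ⟨sawSlope n, sawSlope_integrableOn n, fun t ht => ?_⟩
  have h0t : (0:ℝ) ≤ t := ht.1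
  have hint : IntervalIntegrable (sawSlope n) volume 0 t := by
    rw [intervalIntegrable_iff_integrableOn_Icc_of_le h0t]
    exact (sawSlope_integrableOn n).mono_set (Set.Icc_subset_Icc le_rfl ht.2)
  have := intervalIntegral.integral_eq_sub_of_hasDeriv_right_of_le h0t
    ((sawtooth_lipschitz hn).continuous.continuousOn)
    (fun x _ => sawtooth_hasDerivWithinAt hn x) hint
  rw [this, sawtooth_zero]
  ring

lemma sawtooth_energy_le {n : ℕ} (hn : 0 < n) :
    energyST (sawtooth n) ≤ ENNReal.ofReal (1 / (4 * n ^ 2)) := by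
  have hc : (0:ℝ) < n := by exact_mod_cast hn
  set S : Set ℝ := Set.range (fun k : ℤ => (k:ℝ) / (2*n)) with hS
  have hS0 : volume S = 0 := (Set.countable_range _).measure_zero _
  have hae : ∀ᵐ t ∂volume, t ∈ Set.Ioc (0:ℝ) 1 →
      ENNReal.ofReal ((deriv (sawtooth n) t ^ 2 - 1) ^ 2 + sawtooth n t ^ 2)
        ≤ ENNReal.ofReal (1 / (4 * n ^ 2)) := by
    rw [← compl_mem_ae_iff] at hS0
    filter_upwards [hS0] with t htS _
    have ht : ∀ k : ℤ, 2*(n:ℝ)*t ≠ (k:ℝ) := by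
      intro k hk
      exact htS ⟨k, by field_simp; linarith⟩
    obtain ⟨d, hd2, hd⟩ := sawtooth_hasDerivAt hn ht
    rw [hd.deriv, hd2]
    simp only [sub_self, ne_eq, OfNat.ofNat_ne_zero, not_false_eq_true, zero_pow, zero_add]
    apply ENNReal.ofReal_le_ofReal
    have h1 : sawtooth n t ≤ 1/(2*n) := sawtooth_le hn t
    have h2 : 0 ≤ sawtooth n t := abs_nonneg _
    calc sawtooth n t ^ 2 ≤ (1/(2*(n:ℝ)))^2 := by nlinarith
      _ = 1 / (4 * (n:ℝ)^2) := by field_simp; ring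
  calc energyST (sawtooth n)
      ≤ ∫⁻ _ in Set.Ioc (0:ℝ) 1, ENNReal.ofReal (1 / (4 * n ^ 2)) := by
        apply lintegral_mono_ae
        exact ae_restrict_of_ae_restrict_of_subset (le_refl _)
          ((ae_restrict_iff' measurableSet_Ioc).mpr hae)
    _ = ENNReal.ofReal (1 / (4 * n ^ 2)) := by
        rw [setLIntegral_const, Real.volume_Ioc]
        norm_num

lemma sawtooth_one {n : ℕ} (hn : 0 < n) : sawtooth n 1 = 0 := by
  have hc : (0:ℝ) < n := by exact_mod_cast hn
  rw [sawtooth, mul_one, round_natCast]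
  push_cast
  rw [div_self (ne_of_gt hc)]
  simp

theorem sawtooth_infimum_zero :
    sInf {e : ENNReal | ∃ y : ℝ → ℝ, AbsCont y ∧
        y 0 = 0 ∧ y 1 = 0 ∧ e = energyST y} = 0 ∧
    ∀ n : ℕ, 2 ≤ n →
      (∃ K : NNReal, LipschitzOnWith K (sawtooth n) (Set.Icc (0 : ℝ) 1)) ∧
      sawtooth n 0 = 0 ∧ sawtooth n 1 = 0 ∧
      energyST (sawtooth n) ≤ ENNReal.ofReal (1 / (4 * n ^ 2)) := by
  have hmem : ∀ n : ℕ, 0 < n → energyST (sawtooth n) ∈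
      {e : ENNReal | ∃ y : ℝ → ℝ, AbsCont y ∧ y 0 = 0 ∧ y 1 = 0 ∧ e = energyST y} := by
    intro n hn
    exact ⟨sawtooth n, sawtooth_absCont hn, sawtooth_zero n, sawtooth_one hn, rfl⟩
  constructor
  · refine le_antisymm ?_ zero_le
    have hle : ∀ n : ℕ, 0 < n →
        sInf {e : ENNReal | ∃ y : ℝ → ℝ, AbsCont y ∧ y 0 = 0 ∧ y 1 = 0 ∧ e = energyST y}
          ≤ ENNReal.ofReal (1 / (4 * n ^ 2)) :=
      fun n hn => (sInf_le (hmem n hn)).trans (sawtooth_energy_le hn)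
    have htend : Filter.Tendsto (fun n : ℕ => ENNReal.ofReal (1 / (4 * (n:ℝ) ^ 2)))
        Filter.atTop (nhds 0) := by
      rw [← ENNReal.ofReal_zero]
      apply ENNReal.tendsto_ofReal
      apply squeeze_zero (fun n => by positivity) (g := fun n : ℕ => 1/(n:ℝ))
        _ tendsto_one_div_atTop_nhds_zero_nat
      intro n
      rcases Nat.eq_zero_or_pos n with h | h
      · simp [h]
      · have hc : (1:ℝ) ≤ n := by exact_mod_cast h
        apply one_div_le_one_div_of_le (by positivity)
        nlinarith
    refine ge_of_tendsto htend ?_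
    filter_upwards [Filter.eventually_ge_atTop 1] with n hn
    exact hle n hn
  · intro n hn
    have hn' : 0 < n := by omega
    refine ⟨⟨1, (sawtooth_lipschitz hn').lipschitzOnWith⟩, sawtooth_zero n,
      sawtooth_one hn', ?_⟩
    exact sawtooth_energy_le hn'
end
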